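/- arXiv:1106.3116 — 2 statements merged into one kernel-verified Lean document; each statement's English description precedes it below -/
import Mathlib

section
/- Let 0 < κ ≤ λ and let J be an ordered partition of {1,…,q}. For every point c ∈ relint(λ·τ_J), the metric projection π_κ(c) of c onto κ·P^{q−1} lies in the face κ·τ_J. -/
open Set Pointwise

noncomputable section

/-- The vertex `P_ρ` of the permutohedron: the point whose `ρ(k)`-th coordinate is
`k − (q+1)/2` (with `k` running through `1,…,q`, here 0-indexed as `Fin q`). -/
def vertexPoint (q : ℕ) (ρ : Equiv.Perm (Fin q)) : EuclideanSpace ℝ (Fin q) :=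
  WithLp.toLp 2 (fun i => ((ρ.symm i : ℕ) + 1 : ℝ) - ((q : ℝ) + 1) / 2)

/-- The permutohedron `P^{q−1} ⊂ ℝ^q`: the convex hull of the points `P_ρ`. -/
def permutohedron (q : ℕ) : Set (EuclideanSpace ℝ (Fin q)) :=
  convexHull ℝ (Set.range (vertexPoint q))

/-- An ordered partition `J = (J_1,…,J_s)` of `{1,…,q}` into `s` nonempty subsets. -/
structure OrderedPartition (q s : ℕ) where
  blocks : Fin s → Finset (Fin q)
  nonempty : ∀ k, (blocks k).Nonempty
  disjoint : ∀ k l, k ≠ l → Disjoint (blocks k) (blocks l)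
  covers : ∀ j : Fin q, ∃ k, j ∈ blocks k

/-- `cumCard J n = r_n`, the total cardinality of the first `n` blocks. -/
def cumCard {q s : ℕ} (J : OrderedPartition q s) (n : ℕ) : ℕ :=
  ∑ i ∈ Finset.univ.filter (fun i : Fin s => (i : ℕ) < n), (J.blocks i).card

/-- A permutation `π` is compatible with the ordered partition `J` if it maps the
`k`-th consecutive block `{r_{k−1}+1,…,r_k}` (0-indexed: `[r_{k−1}, r_k)`) onto `J_k`;
these are exactly the permutations `σρ` with `σ` in the Young subgroup. -/
def compatiblePerm {q s : ℕ} (J : OrderedPartition q s) (π : Equiv.Perm (Fin q)) : Prop :=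
  ∀ (k : Fin s) (i : Fin q),
    π i ∈ J.blocks k ↔ cumCard J (k : ℕ) ≤ (i : ℕ) ∧ (i : ℕ) < cumCard J ((k : ℕ) + 1)

/-- The face `τ_J` of the permutohedron corresponding to the ordered partition `J`. -/
def face (q s : ℕ) (J : OrderedPartition q s) : Set (EuclideanSpace ℝ (Fin q)) :=
  convexHull ℝ {x | ∃ π : Equiv.Perm (Fin q), compatiblePerm J π ∧ x = vertexPoint q π}

/-- The metric projection onto a set `K`: a point of `K` at minimal distance
(unique when `K` is compact, convex and nonempty in Euclidean space). -/
def metricProj {E : Type*} [MetricSpace E] [Nonempty E] (K : Set E) (c : E) : E :=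
  Classical.epsilon fun y => y ∈ K ∧ ∀ z ∈ K, dist c y ≤ dist c z


def topF (q a : ℕ) : Finset (Fin q) := Finset.univ.filter (fun k : Fin q => a ≤ (k : ℕ))

lemma mem_topF {q a : ℕ} {k : Fin q} : k ∈ topF q a ↔ a ≤ (k : ℕ) := by simp [topF]

lemma card_topF (q a : ℕ) : (topF q a).card = q - a := by
  classical
  induction a with
  | zero => simp [topF]
  | succ a ih =>
      rcases le_or_gt q a with h | h
      · have h1 : topF q (a+1) = ∅ := by ext k; simp [topF]; omega
        rw [h1]; simp; omega
      · have key : topF q a = insert ⟨a, h⟩ (topF q (a+1)) := by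
          ext k
          simp only [mem_topF, Finset.mem_insert, Fin.ext_iff]
          omega
        have hni : (⟨a, h⟩ : Fin q) ∉ topF q (a+1) := by simp [mem_topF]
        rw [key, Finset.card_insert_of_notMem hni] at ih
        omega

lemma sum_topF (q a : ℕ) (ha : a ≤ q) :
    ∑ k ∈ topF q a, ((k : ℕ) + 1 : ℝ) = ((q : ℝ) * (q + 1) - (a : ℝ) * (a + 1)) / 2 := by
  induction q with
  | zero =>
      have : a = 0 := by omega
      subst this; simp [topF]
  | succ q ih =>
      rcases le_or_gt a q with h | h
      · have key : topF (q+1) a = insert (⟨q, by omega⟩ : Fin (q+1))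
            ((topF q a).image (Fin.castSucc)) := by
          ext k
          simp only [mem_topF, Finset.mem_insert, Finset.mem_image, Fin.ext_iff,
            Fin.coe_castSucc]
          constructor
          · intro hk
            rcases eq_or_lt_of_le (Nat.lt_succ_iff.mp k.isLt) with h' | h'
            · left; omega
            · right; exact ⟨⟨(k : ℕ), h'⟩, hk, rfl⟩
          · rintro (hk | ⟨j, hj, hjk⟩)
            · omega
            · omega
        have hni : (⟨q, by omega⟩ : Fin (q+1)) ∉ (topF q a).image (Fin.castSucc) := by
          simp only [Finset.mem_image, not_exists]
          rintro j ⟨_, hj⟩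
          have := congrArg Fin.val hj
          simp at this
          omega
        rw [key, Finset.sum_insert hni, Finset.sum_image (by
          intro x _ y _ hxy; exact Fin.castSucc_injective _ hxy)]
        simp only [Fin.coe_castSucc]
        rw [ih h]
        push_cast
        ring
      · have ha1 : a = q + 1 := by omega
        subst ha1
        have hemp : topF (q+1) (q+1) = ∅ := by ext k; simp [mem_topF]; omega
        rw [hemp]
        simp

lemma sum_le_sum_of_pair {q : ℕ} (e : Fin q → ℝ) (A B : Finset (Fin q))
    (hcard : A.card = B.card) (h : ∀ k ∈ A, ∀ j ∈ B, e k ≤ e j) :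
    ∑ k ∈ A, e k ≤ ∑ j ∈ B, e j := by
  rcases A.eq_empty_or_nonempty with rfl | hA
  · have : B = ∅ := Finset.card_eq_zero.mp (by simpa using hcard.symm)
    simp [this]
  · have hB : B.Nonempty := Finset.card_pos.mp (by have := Finset.card_pos.mpr hA; omega)
    obtain ⟨j₀, hj₀, hmin⟩ := B.exists_min_image e hB
    calc ∑ k ∈ A, e k ≤ A.card • e j₀ :=
          Finset.sum_le_card_nsmul _ _ _ (fun k hk => h k hk j₀ hj₀)
      _ = B.card • e j₀ := by rw [hcard]
      _ ≤ ∑ j ∈ B, e j := Finset.card_nsmul_le_sum _ _ _ hmin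

lemma sum_lt_sum_of_pair {q : ℕ} (e : Fin q → ℝ) (A B : Finset (Fin q))
    (hcard : A.card = B.card) (hA : A.Nonempty) (h : ∀ k ∈ A, ∀ j ∈ B, e k < e j) :
    ∑ k ∈ A, e k < ∑ j ∈ B, e j := by
  have hB : B.Nonempty := Finset.card_pos.mp (by have := Finset.card_pos.mpr hA; omega)
  obtain ⟨j₀, hj₀, hmin⟩ := B.exists_min_image e hB
  calc ∑ k ∈ A, e k < ∑ k ∈ A, e j₀ :=
        Finset.sum_lt_sum_of_nonempty hA (fun k hk => h k hk j₀ hj₀)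
    _ = B.card • e j₀ := by rw [Finset.sum_const, hcard]
    _ ≤ ∑ j ∈ B, e j := Finset.card_nsmul_le_sum _ _ _ hmin

lemma card_sdiff_eq_card_sdiff {q : ℕ} {S T : Finset (Fin q)} (h : S.card = T.card) :
    (S \ T).card = (T \ S).card := by
  have h1 := Finset.card_sdiff_add_card_inter S T
  have h2 := Finset.card_sdiff_add_card_inter T S
  rw [Finset.inter_comm] at h2
  omega

lemma sdiff_pair_le {q : ℕ} {S : Finset (Fin q)} {a : ℕ} (e : Fin q → ℝ)
    (he : Monotone e) :
    ∀ k ∈ S \ topF q a, ∀ j ∈ topF q a \ S, e k ≤ e j := by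
  intro k hk j hj
  have hk' : ¬ a ≤ (k : ℕ) := by
    have := (Finset.mem_sdiff.mp hk).2
    simpa [mem_topF] using this
  have hj' : a ≤ (j : ℕ) := mem_topF.mp (Finset.mem_sdiff.mp hj).1
  exact he (by omega : k ≤ j)

lemma sum_le_sum_topF {q : ℕ} (e : Fin q → ℝ) (he : Monotone e) (S : Finset (Fin q))
    (a : ℕ) (hcard : S.card = q - a) :
    ∑ k ∈ S, e k ≤ ∑ k ∈ topF q a, e k := by
  classical
  have hct : (topF q a).card = q - a := card_topF q a
  have hc : (S \ topF q a).card = (topF q a \ S).card :=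
    card_sdiff_eq_card_sdiff (by omega)
  have h1 := Finset.sum_inter_add_sum_sdiff S (topF q a) e
  have h2 := Finset.sum_inter_add_sum_sdiff (topF q a) S e
  rw [Finset.inter_comm] at h2
  have key : ∑ k ∈ S \ topF q a, e k ≤ ∑ j ∈ topF q a \ S, e j :=
    sum_le_sum_of_pair e _ _ hc (sdiff_pair_le e he)
  linarith

lemma eq_topF_of_sum_eq {q : ℕ} (e : Fin q → ℝ) (he : StrictMono e) (S : Finset (Fin q))
    (a : ℕ) (hcard : S.card = q - a)
    (hsum : ∑ k ∈ S, e k = ∑ k ∈ topF q a, e k) : S = topF q a := by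
  classical
  by_contra hne
  have hct : (topF q a).card = q - a := card_topF q a
  have hc : (S \ topF q a).card = (topF q a \ S).card :=
    card_sdiff_eq_card_sdiff (by omega)
  have hAne : (S \ topF q a).Nonempty := by
    rcases Finset.eq_empty_or_nonempty (S \ topF q a) with hemp | h
    · exfalso
      apply hne
      exact Finset.eq_of_subset_of_card_le (Finset.sdiff_eq_empty_iff_subset.mp hemp)
        (by omega)
    · exact h
  have key : ∑ k ∈ S \ topF q a, e k < ∑ j ∈ topF q a \ S, e j := by
    apply sum_lt_sum_of_pair e _ _ hc hAne
    intro k hk j hj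
    have hk' : ¬ a ≤ (k : ℕ) := by
      have := (Finset.mem_sdiff.mp hk).2
      simpa [mem_topF] using this
    have hj' : a ≤ (j : ℕ) := mem_topF.mp (Finset.mem_sdiff.mp hj).1
    exact he (by omega : k < j)
  have h1 := Finset.sum_inter_add_sum_sdiff S (topF q a) e
  have h2 := Finset.sum_inter_add_sum_sdiff (topF q a) S e
  rw [Finset.inter_comm] at h2
  linarith

/-! ### partial sums over the permutohedron -/

/-- `Fval q a` is the maximal possible coordinate sum over a set of `q - a`
coordinates, for points of the permutohedron. -/
def Fval (q a : ℕ) : ℝ := ((q : ℝ) - a) * a / 2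

lemma eIdx_monotone (q : ℕ) : Monotone (fun k : Fin q => ((k : ℕ) + 1 : ℝ)) := by
  intro k j hkj
  have h : (k : ℕ) ≤ (j : ℕ) := hkj
  simp only [add_le_add_iff_right, Nat.cast_le]
  exact h

lemma eIdx_strictMono (q : ℕ) : StrictMono (fun k : Fin q => ((k : ℕ) + 1 : ℝ)) := by
  intro k j hkj
  have h : (k : ℕ) < (j : ℕ) := hkj
  simp only [add_lt_add_iff_right, Nat.cast_lt]
  exact h

lemma vertex_sum_split (q : ℕ) (ρ : Equiv.Perm (Fin q)) (S : Finset (Fin q)) :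
    ∑ i ∈ S, vertexPoint q ρ i
      = (∑ k ∈ S.image ρ.symm, ((k : ℕ) + 1 : ℝ)) - S.card * ((q : ℝ) + 1) / 2 := by
  rw [Finset.sum_image (fun x _ y _ h => ρ.symm.injective h)]
  calc ∑ i ∈ S, vertexPoint q ρ i
      = ∑ i ∈ S, (((ρ.symm i : ℕ) + 1 : ℝ) - ((q : ℝ) + 1) / 2) := rfl
    _ = (∑ i ∈ S, ((ρ.symm i : ℕ) + 1 : ℝ)) - S.card * ((q : ℝ) + 1) / 2 := by
        rw [Finset.sum_sub_distrib, Finset.sum_const, nsmul_eq_mul]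
        ring

lemma vertex_sum_le (q : ℕ) (ρ : Equiv.Perm (Fin q)) (S : Finset (Fin q)) (a : ℕ)
    (ha : a ≤ q) (hcard : S.card = q - a) :
    ∑ i ∈ S, vertexPoint q ρ i ≤ Fval q a := by
  rw [vertex_sum_split]
  have himg : (S.image ρ.symm).card = q - a := by
    rw [Finset.card_image_of_injective _ ρ.symm.injective, hcard]
  have h1 : ∑ k ∈ S.image ρ.symm, ((k : ℕ) + 1 : ℝ) ≤ ∑ k ∈ topF q a, ((k : ℕ) + 1 : ℝ) :=
    sum_le_sum_topF _ (eIdx_monotone q) _ a himg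
  rw [sum_topF q a ha] at h1
  have hcq : (S.card : ℝ) = (q : ℝ) - a := by rw [hcard, Nat.cast_sub ha]
  rw [hcq]
  unfold Fval
  nlinarith [h1]

lemma vertex_img_eq_of_sum_eq (q : ℕ) (ρ : Equiv.Perm (Fin q)) (S : Finset (Fin q)) (a : ℕ)
    (ha : a ≤ q) (hcard : S.card = q - a)
    (hsum : ∑ i ∈ S, vertexPoint q ρ i = Fval q a) : S.image ρ.symm = topF q a := by
  apply eq_topF_of_sum_eq _ (eIdx_strictMono q) _ a
    (by rw [Finset.card_image_of_injective _ ρ.symm.injective, hcard])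
  rw [vertex_sum_split] at hsum
  rw [sum_topF q a ha]
  have hcq : (S.card : ℝ) = (q : ℝ) - a := by rw [hcard, Nat.cast_sub ha]
  rw [hcq] at hsum
  unfold Fval at hsum
  nlinarith [hsum]

lemma vertex_total_sum (q : ℕ) (ρ : Equiv.Perm (Fin q)) :
    ∑ i, vertexPoint q ρ i = 0 := by
  have h := vertex_sum_split q ρ Finset.univ
  have himg : (Finset.univ : Finset (Fin q)).image ρ.symm = Finset.univ := by
    ext k; simp
  rw [himg] at h
  have huniv : (Finset.univ : Finset (Fin q)) = topF q 0 := by ext k; simp [mem_topF]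
  rw [h]
  have h1 : ∑ k ∈ (Finset.univ : Finset (Fin q)), ((k : ℕ) + 1 : ℝ) = (q : ℝ) * (q + 1) / 2 := by
    rw [huniv, sum_topF q 0 (Nat.zero_le q)]
    push_cast
    ring
  rw [h1]
  simp only [Finset.card_univ, Fintype.card_fin]
  ring

/-! ### convexity transfer -/

lemma euclid_smul_add_apply {q : ℕ} (a b : ℝ) (x y : EuclideanSpace ℝ (Fin q)) (i : Fin q) :
    (a • x + b • y) i = a * x i + b * y i := rfl

lemma convex_sumLE {q : ℕ} (U : Finset (Fin q)) (r : ℝ) :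
    Convex ℝ {x : EuclideanSpace ℝ (Fin q) | ∑ i ∈ U, x i ≤ r} := by
  intro x hx y hy a b ha hb hab
  simp only [Set.mem_setOf_eq] at *
  have : ∑ i ∈ U, (a • x + b • y) i = a * ∑ i ∈ U, x i + b * ∑ i ∈ U, y i := by
    simp only [euclid_smul_add_apply, Finset.sum_add_distrib, Finset.mul_sum]
  rw [this]
  have h1 : a * ∑ i ∈ U, x i ≤ a * r := mul_le_mul_of_nonneg_left hx ha
  have h2 : b * ∑ i ∈ U, y i ≤ b * r := mul_le_mul_of_nonneg_left hy hb
  have h3 : a * r + b * r = r := by rw [← add_mul, hab, one_mul]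
  linarith

lemma convex_sumEQ {q : ℕ} (U : Finset (Fin q)) (r : ℝ) :
    Convex ℝ {x : EuclideanSpace ℝ (Fin q) | ∑ i ∈ U, x i = r} := by
  intro x hx y hy a b ha hb hab
  simp only [Set.mem_setOf_eq] at *
  have : ∑ i ∈ U, (a • x + b • y) i = a * ∑ i ∈ U, x i + b * ∑ i ∈ U, y i := by
    simp only [euclid_smul_add_apply, Finset.sum_add_distrib, Finset.mul_sum]
  rw [this, hx, hy, ← add_mul, hab, one_mul]

/-! ### membership facts for the permutohedron -/

lemma perm_total_sum {q : ℕ} {x : EuclideanSpace ℝ (Fin q)} (hx : x ∈ permutohedron q) :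
    ∑ i, x i = 0 := by
  have : permutohedron q ⊆ {x : EuclideanSpace ℝ (Fin q) | ∑ i ∈ Finset.univ, x i = 0} := by
    apply convexHull_min _ (convex_sumEQ Finset.univ 0)
    rintro x ⟨ρ, rfl⟩
    exact vertex_total_sum q ρ
  exact this hx

lemma perm_partial_sum {q : ℕ} {x : EuclideanSpace ℝ (Fin q)} (hx : x ∈ permutohedron q)
    (S : Finset (Fin q)) (a : ℕ) (ha : a ≤ q) (hcard : S.card = q - a) :
    ∑ i ∈ S, x i ≤ Fval q a := by
  have : permutohedron q ⊆ {x : EuclideanSpace ℝ (Fin q) | ∑ i ∈ S, x i ≤ Fval q a} := by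
    apply convexHull_min _ (convex_sumLE S (Fval q a))
    rintro x ⟨ρ, rfl⟩
    exact vertex_sum_le q ρ S a ha hcard
  exact this hx

/-! ### ordered partitions: suffix sets -/

def suffixF {q s : ℕ} (J : OrderedPartition q s) (t : ℕ) : Finset (Fin q) :=
  Finset.univ.filter (fun i => ∃ k : Fin s, t ≤ (k : ℕ) ∧ i ∈ J.blocks k)

lemma mem_suffixF {q s : ℕ} {J : OrderedPartition q s} {t : ℕ} {i : Fin q} :
    i ∈ suffixF J t ↔ ∃ k : Fin s, t ≤ (k : ℕ) ∧ i ∈ J.blocks k := by simp [suffixF]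

lemma cumCard_mono {q s : ℕ} (J : OrderedPartition q s) {t t' : ℕ} (h : t ≤ t') :
    cumCard J t ≤ cumCard J t' := by
  apply Finset.sum_le_sum_of_subset
  intro k hk
  simp only [Finset.mem_filter, Finset.mem_univ, true_and] at *
  omega

lemma sum_blocks_card {q s : ℕ} (J : OrderedPartition q s) :
    ∑ k : Fin s, (J.blocks k).card = q := by
  classical
  have huniv : (Finset.univ : Finset (Fin q)) = Finset.univ.biUnion (fun k => J.blocks k) := by
    ext i
    simp only [Finset.mem_univ, Finset.mem_biUnion, true_iff]
    obtain ⟨k, hk⟩ := J.covers i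
    exact ⟨k, trivial, hk⟩
  have hcard := Finset.card_biUnion (s := (Finset.univ : Finset (Fin s)))
    (t := fun k => J.blocks k) (fun k _ l _ hkl => J.disjoint k l hkl)
  rw [← huniv] at hcard
  simp only [Finset.card_univ, Fintype.card_fin] at hcard
  omega

lemma cumCard_le {q s : ℕ} (J : OrderedPartition q s) (t : ℕ) : cumCard J t ≤ q := by
  calc cumCard J t ≤ ∑ k : Fin s, (J.blocks k).card :=
        Finset.sum_le_sum_of_subset (Finset.filter_subset _ _)
    _ = q := sum_blocks_card J

lemma card_suffixF {q s : ℕ} (J : OrderedPartition q s) (t : ℕ) :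
    (suffixF J t).card = q - cumCard J t := by
  classical
  have hsfx : suffixF J t = (Finset.univ.filter (fun k : Fin s => t ≤ (k : ℕ))).biUnion
      (fun k => J.blocks k) := by
    ext i
    simp only [mem_suffixF, Finset.mem_biUnion, Finset.mem_filter, Finset.mem_univ, true_and]
  rw [hsfx, Finset.card_biUnion (fun k _ l _ hkl => J.disjoint k l hkl)]
  have hsplit : ∑ k ∈ Finset.univ.filter (fun k : Fin s => (k : ℕ) < t), (J.blocks k).card
      + ∑ k ∈ Finset.univ.filter (fun k : Fin s => t ≤ (k : ℕ)), (J.blocks k).card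
      = ∑ k : Fin s, (J.blocks k).card := by
    rw [← Finset.sum_filter_add_sum_filter_not Finset.univ (fun k : Fin s => (k : ℕ) < t)]
    congr 1
    apply Finset.sum_congr _ (fun _ _ => rfl)
    ext k; simp
  have htot := sum_blocks_card J
  have hcc : cumCard J t = ∑ k ∈ Finset.univ.filter (fun k : Fin s => (k : ℕ) < t),
      (J.blocks k).card := rfl
  omega

lemma compat_mem_suffixF {q s : ℕ} {J : OrderedPartition q s} {π : Equiv.Perm (Fin q)}
    (hπ : compatiblePerm J π) (t : ℕ) (i : Fin q) :
    i ∈ suffixF J t ↔ cumCard J t ≤ ((π.symm i : Fin q) : ℕ) := by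
  constructor
  · rintro hi
    obtain ⟨k, hkt, hik⟩ := mem_suffixF.mp hi
    have := (hπ k (π.symm i)).mp (by simpa using hik)
    have hmono := cumCard_mono J hkt
    omega
  · intro hle
    obtain ⟨k, hk⟩ := J.covers i
    have := (hπ k (π.symm i)).mp (by simpa using hk)
    apply mem_suffixF.mpr
    refine ⟨k, ?_, hk⟩
    by_contra hlt
    have hmono := cumCard_mono J (show (k : ℕ) + 1 ≤ t by omega)
    omega

lemma compat_image_suffixF {q s : ℕ} {J : OrderedPartition q s} {π : Equiv.Perm (Fin q)}
    (hπ : compatiblePerm J π) (t : ℕ) :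
    (suffixF J t).image π.symm = topF q (cumCard J t) := by
  ext j
  simp only [Finset.mem_image, mem_topF]
  constructor
  · rintro ⟨i, hi, rfl⟩
    exact (compat_mem_suffixF hπ t i).mp hi
  · intro hj
    refine ⟨π j, ?_, by simp⟩
    apply (compat_mem_suffixF hπ t (π j)).mpr
    simpa using hj

/-! ### the face: sums and the converse characterization -/

lemma face_subset_perm {q s : ℕ} (J : OrderedPartition q s) :
    face q s J ⊆ permutohedron q := by
  apply convexHull_mono
  rintro x ⟨π, _, rfl⟩
  exact ⟨π, rfl⟩

lemma vertex_sum_suffix {q s : ℕ} {J : OrderedPartition q s} {π : Equiv.Perm (Fin q)}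
    (hπ : compatiblePerm J π) (t : ℕ) :
    ∑ i ∈ suffixF J t, vertexPoint q π i = Fval q (cumCard J t) := by
  have ha : cumCard J t ≤ q := cumCard_le J t
  rw [vertex_sum_split, compat_image_suffixF hπ t, sum_topF q _ ha, card_suffixF J t]
  have hcq : ((q - cumCard J t : ℕ) : ℝ) = (q : ℝ) - cumCard J t := Nat.cast_sub ha
  rw [hcq]
  unfold Fval
  ring

lemma face_suffix_sum {q s : ℕ} {J : OrderedPartition q s} {x : EuclideanSpace ℝ (Fin q)}
    (hx : x ∈ face q s J) (t : ℕ) :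
    ∑ i ∈ suffixF J t, x i = Fval q (cumCard J t) := by
  have : face q s J ⊆
      {x : EuclideanSpace ℝ (Fin q) | ∑ i ∈ suffixF J t, x i = Fval q (cumCard J t)} := by
    apply convexHull_min _ (convex_sumEQ _ _)
    rintro x ⟨π, hπ, rfl⟩
    exact vertex_sum_suffix hπ t
  exact this hx

lemma mem_blocks_iff_suffix {q s : ℕ} (J : OrderedPartition q s) (k : Fin s) (i : Fin q) :
    i ∈ J.blocks k ↔ (i ∈ suffixF J (k : ℕ) ∧ i ∉ suffixF J ((k : ℕ) + 1)) := by
  constructor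
  · intro hi
    refine ⟨mem_suffixF.mpr ⟨k, le_refl _, hi⟩, ?_⟩
    intro hmem
    obtain ⟨k', hk', hik'⟩ := mem_suffixF.mp hmem
    have hne : k' ≠ k := by
      intro h; subst h; omega
    have := (J.disjoint k' k hne).le_bot (Finset.mem_inter.mpr ⟨hik', hi⟩)
    simp at this
  · rintro ⟨h1, h2⟩
    obtain ⟨k', hk', hik'⟩ := mem_suffixF.mp h1
    have : k' = k := by
      by_contra hne
      apply h2
      apply mem_suffixF.mpr
      refine ⟨k', ?_, hik'⟩
      have : (k' : ℕ) ≠ (k : ℕ) := fun h => hne (Fin.ext h)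
      omega
    subst this
    exact hik'

lemma compat_of_tight {q s : ℕ} (J : OrderedPartition q s) (ρ : Equiv.Perm (Fin q))
    (h : ∀ t ≤ s, ∑ i ∈ suffixF J t, vertexPoint q ρ i = Fval q (cumCard J t)) :
    compatiblePerm J ρ := by
  have key : ∀ t ≤ s, ∀ j : Fin q, (ρ j ∈ suffixF J t ↔ cumCard J t ≤ (j : ℕ)) := by
    intro t ht j
    have himg : (suffixF J t).image ρ.symm = topF q (cumCard J t) := by
      apply vertex_img_eq_of_sum_eq q ρ _ _ (cumCard_le J t) (card_suffixF J t) (h t ht)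
    constructor
    · intro hj
      have : ρ.symm (ρ j) ∈ (suffixF J t).image ρ.symm :=
        Finset.mem_image_of_mem _ hj
      rw [himg] at this
      simpa [mem_topF] using this
    · intro hj
      have : j ∈ topF q (cumCard J t) := mem_topF.mpr hj
      rw [← himg] at this
      obtain ⟨i, hi, hij⟩ := Finset.mem_image.mp this
      have : i = ρ j := by
        have h2 := congrArg ρ hij
        simp at h2
        exact h2
      subst this
      exact hi
  intro k i
  have hks : (k : ℕ) ≤ s := le_of_lt k.isLt
  have hks1 : (k : ℕ) + 1 ≤ s := k.isLt
  rw [mem_blocks_iff_suffix J k (ρ i), key (k : ℕ) hks i, key ((k : ℕ) + 1) hks1 i]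
  constructor
  · rintro ⟨h1, h2⟩
    exact ⟨h1, by omega⟩
  · rintro ⟨h1, h2⟩
    exact ⟨h1, by omega⟩

lemma sum_smul_apply {q : ℕ} {ι : Type} (tf : Finset ι) (w : ι → ℝ)
    (z : ι → EuclideanSpace ℝ (Fin q)) (j : Fin q) :
    (∑ i ∈ tf, w i • z i) j = ∑ i ∈ tf, w i * z i j := by
  classical
  induction tf using Finset.induction with
  | empty => rfl
  | insert _ _ hnotmem ih =>
      rw [Finset.sum_insert hnotmem, Finset.sum_insert hnotmem, ← ih]
      rfl

lemma mem_face_of_tight {q s : ℕ} (J : OrderedPartition q s) {x : EuclideanSpace ℝ (Fin q)}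
    (hx : x ∈ permutohedron q)
    (h : ∀ t ≤ s, ∑ i ∈ suffixF J t, x i = Fval q (cumCard J t)) :
    x ∈ face q s J := by
  classical
  rw [permutohedron, _root_.convexHull_eq] at hx
  obtain ⟨ι, tf, w, z, hw0, hw1, hz, hcm⟩ := hx
  have hzsum : ∀ t ≤ s, ∀ i ∈ tf, w i ≠ 0 →
      ∑ j ∈ suffixF J t, z i j = Fval q (cumCard J t) := by
    intro t ht
    have hle : ∀ i ∈ tf, ∑ j ∈ suffixF J t, z i j ≤ Fval q (cumCard J t) := by
      intro i hi
      obtain ⟨ρ, hρ⟩ := hz i hi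
      rw [← hρ]
      exact vertex_sum_le q ρ _ _ (cumCard_le J t) (card_suffixF J t)
    have hsum0 : ∑ i ∈ tf, w i * (Fval q (cumCard J t) - ∑ j ∈ suffixF J t, z i j) = 0 := by
      have hx' : ∑ j ∈ suffixF J t, x j = Fval q (cumCard J t) := h t ht
      have hxc : x = ∑ i ∈ tf, w i • z i := by
        rw [← hcm, Finset.centerMass_eq_of_sum_1 _ _ hw1]
      have hswap : ∑ j ∈ suffixF J t, x j
          = ∑ i ∈ tf, w i * ∑ j ∈ suffixF J t, z i j := by
        rw [hxc]
        rw [Finset.sum_congr rfl (fun j _ => sum_smul_apply tf w z j), Finset.sum_comm]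
        simp only [Finset.mul_sum]
      rw [hswap] at hx'
      have : ∑ i ∈ tf, w i * (Fval q (cumCard J t) - ∑ j ∈ suffixF J t, z i j)
          = (∑ i ∈ tf, w i) * Fval q (cumCard J t)
            - ∑ i ∈ tf, w i * ∑ j ∈ suffixF J t, z i j := by
        rw [Finset.sum_mul, ← Finset.sum_sub_distrib]
        apply Finset.sum_congr rfl
        intro i _
        ring
      rw [this, hw1, one_mul, ← hx']
      ring
    have := (Finset.sum_eq_zero_iff_of_nonneg (fun i hi => by
      have := hle i hi
      have := hw0 i hi
      nlinarith)).mp hsum0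
    intro i hi hwi
    have := this i hi
    rcases mul_eq_zero.mp this with h' | h'
    · exact absurd h' hwi
    · linarith
  have hgen : ∀ i ∈ tf, w i ≠ 0 → z i ∈
      {x : EuclideanSpace ℝ (Fin q) | ∃ π : Equiv.Perm (Fin q),
        compatiblePerm J π ∧ x = vertexPoint q π} := by
    intro i hi hwi
    obtain ⟨ρ, hρ⟩ := hz i hi
    refine ⟨ρ, ?_, hρ.symm⟩
    apply compat_of_tight
    intro t ht
    rw [hρ]
    exact hzsum t ht i hi hwi
  rw [face, ← hcm, ← Finset.centerMass_filter_ne_zero (w := w) z]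
  apply Finset.centerMass_mem_convexHull
  · intro i hi
    exact hw0 i (Finset.mem_filter.mp hi).1
  · rw [Finset.sum_filter_ne_zero, hw1]
    norm_num
  · intro i hi
    obtain ⟨hi1, hi2⟩ := Finset.mem_filter.mp hi
    exact hgen i hi1 hi2

/-! ### the metric projection and its variational inequality -/

lemma euclid_inner_eq {q : ℕ} (u v : EuclideanSpace ℝ (Fin q)) :
    (inner ℝ u v : ℝ) = ∑ i, u i * v i := by
  rw [PiLp.inner_apply]
  simp [RCLike.inner_apply', mul_comm]

lemma perm_nonempty (q : ℕ) : (permutohedron q).Nonempty :=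
  ⟨vertexPoint q 1, subset_convexHull ℝ _ ⟨1, rfl⟩⟩

lemma perm_convex (q : ℕ) : Convex ℝ (permutohedron q) := convex_convexHull ℝ _

lemma perm_compact (q : ℕ) : IsCompact (permutohedron q) :=
  (Set.finite_range (vertexPoint q)).isCompact_convexHull ℝ

lemma metricProj_spec {q : ℕ} (K : Set (EuclideanSpace ℝ (Fin q))) (hK : IsCompact K)
    (hne : K.Nonempty) (c : EuclideanSpace ℝ (Fin q)) :
    metricProj K c ∈ K ∧ ∀ z ∈ K, dist c (metricProj K c) ≤ dist c z := by
  have hex : ∃ y, y ∈ K ∧ ∀ z ∈ K, dist c y ≤ dist c z := by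
    obtain ⟨y, hyK, hmin⟩ := hK.exists_isMinOn hne
      (Continuous.continuousOn (continuous_const.dist continuous_id))
    exact ⟨y, hyK, fun z hz => hmin hz⟩
  exact Classical.epsilon_spec hex

lemma variational {q : ℕ} {K : Set (EuclideanSpace ℝ (Fin q))} (hconv : Convex ℝ K)
    {c y : EuclideanSpace ℝ (Fin q)} (hyK : y ∈ K)
    (hmin : ∀ z ∈ K, dist c y ≤ dist c z) :
    ∀ x ∈ K, ∑ i, (c i - y i) * (x i - y i) ≤ 0 := by
  haveI : Nonempty K := ⟨⟨y, hyK⟩⟩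
  have key : ‖c - y‖ = ⨅ w : K, ‖c - ↑w‖ := by
    apply le_antisymm
    · exact le_ciInf (fun w => by
        have := hmin w w.2
        simpa [dist_eq_norm] using this)
    · exact ciInf_le ⟨0, by rintro r ⟨w, rfl⟩; positivity⟩ (⟨y, hyK⟩ : K)
  have h := (norm_eq_iInf_iff_real_inner_le_zero hconv hyK).mp key
  intro x hx
  have h2 := h x hx
  rw [euclid_inner_eq] at h2
  have : ∀ i, (c - y) i = c i - y i := fun i => rfl
  have : ∀ i, (c - y) i * (x - y) i = (c i - y i) * (x i - y i) := fun i => rfl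
  calc ∑ i, (c i - y i) * (x i - y i) = ∑ i, (c - y) i * (x - y) i := by
        apply Finset.sum_congr rfl
        intro i _
        rfl
    _ ≤ 0 := h2

/-! ### Abel summation along a sorting permutation -/

def Eext (q : ℕ) (d : Fin q → ℝ) (σ : Equiv.Perm (Fin q)) (a : ℕ) : ℝ :=
  if h : a < q then d (σ ⟨a, h⟩) else 0

def coefE (q : ℕ) (d : Fin q → ℝ) (σ : Equiv.Perm (Fin q)) (a : ℕ) : ℝ :=
  Eext q d σ a - (if a = 0 then 0 else Eext q d σ (a - 1))

lemma coefE_nonneg {q : ℕ} {d : Fin q → ℝ} {σ : Equiv.Perm (Fin q)}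
    (hmono : Monotone (d ∘ σ)) {a : ℕ} (ha1 : 1 ≤ a) (haq : a < q) :
    0 ≤ coefE q d σ a := by
  unfold coefE Eext
  rw [dif_pos haq, if_neg (by omega), dif_pos (by omega : a - 1 < q)]
  have := hmono (show (⟨a - 1, by omega⟩ : Fin q) ≤ ⟨a, haq⟩ by
    rw [Fin.le_def]; simp)
  simp only [Function.comp_apply] at this
  linarith

lemma sum_coefE {q : ℕ} (d : Fin q → ℝ) (σ : Equiv.Perm (Fin q)) (m : ℕ) :
    ∑ a ∈ Finset.range (m + 1), coefE q d σ a = Eext q d σ m := by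
  induction m with
  | zero => simp [coefE]
  | succ m ih =>
      rw [Finset.sum_range_succ, ih]
      unfold coefE
      rw [if_neg (by omega)]
      simp only [Nat.add_sub_cancel]
      ring

lemma abel_identity {q : ℕ} (d : Fin q → ℝ) (σ : Equiv.Perm (Fin q)) (x : Fin q → ℝ) :
    ∑ i, d i * x i
      = ∑ a ∈ Finset.range q, coefE q d σ a * ∑ k ∈ topF q a, x (σ k) := by
  classical
  have h0 : ∑ i, d i * x i = ∑ k : Fin q, d (σ k) * x (σ k) :=
    (Equiv.sum_comp σ (fun i => d i * x i)).symm
  have h1 : ∀ k : Fin q, d (σ k) = ∑ a ∈ Finset.range ((k : ℕ) + 1), coefE q d σ a := by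
    intro k
    rw [sum_coefE]
    unfold Eext
    rw [dif_pos k.isLt]
  have h2 : ∀ k : Fin q, Finset.range ((k : ℕ) + 1)
      = (Finset.range q).filter (fun a => a ≤ (k : ℕ)) := by
    intro k
    ext a
    simp only [Finset.mem_range, Finset.mem_filter]
    have := k.isLt
    omega
  calc ∑ i, d i * x i = ∑ k : Fin q, d (σ k) * x (σ k) := h0
    _ = ∑ k : Fin q, ∑ a ∈ Finset.range q, (if a ≤ (k : ℕ) then coefE q d σ a * x (σ k) else 0) := by
        apply Finset.sum_congr rfl
        intro k _
        rw [h1 k, h2 k, Finset.sum_filter, Finset.sum_mul]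
        apply Finset.sum_congr rfl
        intro a _
        split <;> ring
    _ = ∑ a ∈ Finset.range q, ∑ k : Fin q, (if a ≤ (k : ℕ) then coefE q d σ a * x (σ k) else 0) :=
        Finset.sum_comm
    _ = ∑ a ∈ Finset.range q, coefE q d σ a * ∑ k ∈ topF q a, x (σ k) := by
        apply Finset.sum_congr rfl
        intro a _
        rw [Finset.mul_sum]
        unfold topF
        rw [Finset.sum_filter]

lemma sum_topF_image {q : ℕ} (σ : Equiv.Perm (Fin q)) (x : Fin q → ℝ) (a : ℕ) :
    ∑ k ∈ topF q a, x (σ k) = ∑ i ∈ (topF q a).image σ, x i := by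
  rw [Finset.sum_image (fun k _ j _ h => σ.injective h)]

lemma card_topF_image {q : ℕ} (σ : Equiv.Perm (Fin q)) (a : ℕ) :
    ((topF q a).image σ).card = q - a := by
  rw [Finset.card_image_of_injective _ σ.injective, card_topF]

/-! ### sorting vertex and band lemmas -/

lemma sort_vertex_partial (q : ℕ) (σ : Equiv.Perm (Fin q)) (a : ℕ) (ha : a ≤ q) :
    ∑ k ∈ topF q a, vertexPoint q σ (σ k) = Fval q a := by
  have h : ∀ k : Fin q, vertexPoint q σ (σ k) = ((k : ℕ) + 1 : ℝ) - ((q : ℝ) + 1) / 2 := by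
    intro k
    show ((σ.symm (σ k) : ℕ) + 1 : ℝ) - ((q : ℝ) + 1) / 2 = _
    rw [Equiv.symm_apply_apply]
  rw [Finset.sum_congr rfl (fun k _ => h k), Finset.sum_sub_distrib, Finset.sum_const,
    card_topF, sum_topF q a ha, nsmul_eq_mul]
  have hcq : ((q - a : ℕ) : ℝ) = (q : ℝ) - a := Nat.cast_sub ha
  rw [hcq]
  unfold Fval
  ring

lemma Eext_const_band {q : ℕ} (d : Fin q → ℝ) (σ : Equiv.Perm (Fin q)) {A B : ℕ}
    (hz : ∀ a, A < a → a < B → coefE q d σ a = 0) :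
    ∀ a, A ≤ a → a < B → Eext q d σ a = Eext q d σ A := by
  intro a
  induction a with
  | zero =>
      intro h1 _
      have : A = 0 := by omega
      rw [this]
  | succ n ih =>
      intro h1 h2
      rcases Nat.lt_or_ge A (n + 1) with h | h
      · have hc := hz (n + 1) h h2
        have heq : Eext q d σ (n + 1) = Eext q d σ n := by
          unfold coefE at hc
          rw [if_neg (by omega)] at hc
          simp only [Nat.add_sub_cancel] at hc
          linarith
        rw [heq]
        exact ih (by omega) (by omega)
      · have : A = n + 1 := by omega
        rw [this]

lemma sum_band {q : ℕ} (f : Fin q → ℝ) {a b : ℕ} (hab : a ≤ b) :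
    ∑ k ∈ topF q a, f k = (∑ k ∈ topF q b, f k) + ∑ k ∈ topF q a \ topF q b, f k := by
  have hsub : topF q b ⊆ topF q a := by
    intro k hk
    rw [mem_topF] at *
    omega
  rw [← Finset.sum_sdiff hsub]
  ring

lemma card_band {q : ℕ} {a b : ℕ} (hab : a ≤ b) (hbq : b ≤ q) :
    (topF q a \ topF q b).card = b - a := by
  have hsub : topF q b ⊆ topF q a := by
    intro k hk
    rw [mem_topF] at *
    omega
  rw [Finset.card_sdiff_of_subset hsub, card_topF, card_topF]
  omega

lemma concavity_aux (qr x y z lk : ℝ) (h1 : 0 ≤ lk) (hxy : x ≤ y) (hyz : y ≤ z) :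
    (z - y) * (lk * ((qr - x) * x / 2)) + (y - x) * (lk * ((qr - z) * z / 2))
      ≤ (z - x) * (lk * ((qr - y) * y / 2)) := by
  nlinarith [mul_nonneg (mul_nonneg (mul_nonneg h1 (sub_nonneg.mpr hxy))
    (sub_nonneg.mpr hyz)) (sub_nonneg.mpr (hxy.trans hyz))]

/-! ### the key tightness lemma -/

lemma y_suffix_tight {q s : ℕ} (κ lam : ℝ) (hκ : 0 < κ) (hκlam : κ ≤ lam)
    (J : OrderedPartition q s) (c y : EuclideanSpace ℝ (Fin q))
    (hcsuffix : ∀ t, ∑ i ∈ suffixF J t, c i = lam * Fval q (cumCard J t))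
    (hcpartial : ∀ (S : Finset (Fin q)) (a : ℕ), a ≤ q → S.card = q - a →
      ∑ i ∈ S, c i ≤ lam * Fval q a)
    (hypartial : ∀ (S : Finset (Fin q)) (a : ℕ), a ≤ q → S.card = q - a →
      ∑ i ∈ S, y i ≤ κ * Fval q a)
    (hysum : ∑ i, y i = 0)
    (hvar : ∀ x ∈ (κ • permutohedron q), ∑ i, (c i - y i) * (x i - y i) ≤ 0) :
    ∀ t, ∑ i ∈ suffixF J t, y i = κ * Fval q (cumCard J t) := by
  classical
  set d : Fin q → ℝ := fun i => c i - y i with hd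
  set σ : Equiv.Perm (Fin q) := Tuple.sort d with hσ
  have hmono : Monotone (d ∘ σ) := Tuple.monotone_sort d
  -- variational inequality in product form
  have hvar' : ∀ x ∈ (κ • permutohedron q), ∑ i, d i * x i ≤ ∑ i, d i * y i := by
    intro x hx
    have h := hvar x hx
    have hexp : ∑ i, (c i - y i) * (x i - y i)
        = ∑ i, d i * x i - ∑ i, d i * y i := by
      rw [← Finset.sum_sub_distrib]
      apply Finset.sum_congr rfl
      intro i _
      simp only [hd]
      ring
    rw [hexp] at h
    linarith
  -- the sorting vertex
  set v : EuclideanSpace ℝ (Fin q) := vertexPoint q σ with hv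
  have hvK : κ • v ∈ κ • permutohedron q :=
    Set.smul_mem_smul_set (subset_convexHull ℝ _ ⟨σ, rfl⟩)
  -- partial sums of y along the sort
  have hSy_le : ∀ a, a ≤ q → ∑ k ∈ topF q a, y (σ k) ≤ κ * Fval q a := by
    intro a ha
    rw [sum_topF_image]
    exact hypartial _ a ha (card_topF_image σ a)
  have hSy_zero : ∑ k ∈ topF q 0, y (σ k) = 0 := by
    have huniv : topF q 0 = Finset.univ := by ext k; simp [mem_topF]
    rw [huniv]
    rw [Equiv.sum_comp σ y]
    exact hysum
  have hFval0 : Fval q 0 = 0 := by simp [Fval]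
  have hFvalq : Fval q q = 0 := by simp [Fval]
  have htopq : topF q q = ∅ := by
    ext k; simp only [mem_topF, Finset.notMem_empty, iff_false]; omega
  -- tightness at gap positions
  have habel := abel_identity d σ
  have hκv : ∀ a, ∑ k ∈ topF q a, (κ • v) (σ k) = κ * ∑ k ∈ topF q a, v (σ k) := by
    intro a
    rw [Finset.mul_sum]
    apply Finset.sum_congr rfl
    intro k _
    rfl
  have hmain := hvar' (κ • v) hvK
  rw [habel (fun i => (κ • v) i), habel (fun i => y i)] at hmain
  have hterm : ∀ a ∈ Finset.range q,
      0 ≤ coefE q d σ a * (κ * Fval q a - ∑ k ∈ topF q a, y (σ k)) := by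
    intro a haq
    rw [Finset.mem_range] at haq
    rcases Nat.eq_zero_or_pos a with rfl | ha1
    · rw [hSy_zero, hFval0]
      simp
    · have h1 := coefE_nonneg hmono ha1 haq
      have h2 := hSy_le a (le_of_lt haq)
      nlinarith
  have hsum_nonpos : ∑ a ∈ Finset.range q,
      coefE q d σ a * (κ * Fval q a - ∑ k ∈ topF q a, y (σ k)) ≤ 0 := by
    have hcongr : ∀ a ∈ Finset.range q,
        coefE q d σ a * (κ * Fval q a - ∑ k ∈ topF q a, y (σ k))
        = coefE q d σ a * (∑ k ∈ topF q a, (κ • v) (σ k))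
          - coefE q d σ a * (∑ k ∈ topF q a, y (σ k)) := by
      intro a haq
      rw [Finset.mem_range] at haq
      rw [hκv a, sort_vertex_partial q σ a (le_of_lt haq)]
      ring
    rw [Finset.sum_congr rfl hcongr, Finset.sum_sub_distrib]
    linarith
  have htight0 : ∀ a ∈ Finset.range q,
      coefE q d σ a * (κ * Fval q a - ∑ k ∈ topF q a, y (σ k)) = 0 := by
    have := (Finset.sum_eq_zero_iff_of_nonneg hterm).mp
      (le_antisymm hsum_nonpos (Finset.sum_nonneg hterm))
    exact this
  -- tightness of y-partial sums at good positions
  have hTy : ∀ a, a ≤ q → (a = 0 ∨ a = q ∨ coefE q d σ a ≠ 0) →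
      ∑ k ∈ topF q a, y (σ k) = κ * Fval q a := by
    intro a ha hcase
    rcases eq_or_lt_of_le ha with rfl | haq
    · rw [htopq, hFvalq]; simp
    · rcases hcase with rfl | hq | hcoef
      · rw [hSy_zero, hFval0]; ring
      · omega
      · have := htight0 a (Finset.mem_range.mpr haq)
        rcases mul_eq_zero.mp this with h' | h'
        · exact absurd h' hcoef
        · linarith
  intro t
  have habq : cumCard J t ≤ q := cumCard_le J t
  set ab := cumCard J t with hab
  have hupper : ∑ i ∈ suffixF J t, y i ≤ κ * Fval q ab :=
    hypartial _ ab habq (card_suffixF J t)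
  rcases Nat.eq_zero_or_pos ab with hab0 | hab1
  · have hcard : (suffixF J t).card = q := by
      rw [card_suffixF J t, ← hab, hab0]
      omega
    have huniv : suffixF J t = Finset.univ := by
      apply Finset.eq_univ_of_card
      rw [hcard, Fintype.card_fin]
    rw [huniv, hysum, hab0, hFval0]
    ring
  · -- step 1 : the suffix sum of d is at most the top sum of d
    have hstep1 : ∑ i ∈ suffixF J t, d i ≤ ∑ k ∈ topF q ab, d (σ k) := by
      have himg : ∑ i ∈ suffixF J t, d i
          = ∑ k ∈ (suffixF J t).image σ.symm, d (σ k) := by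
        rw [Finset.sum_image (fun i _ j _ h => σ.symm.injective h)]
        apply Finset.sum_congr rfl
        intro i _
        rw [Equiv.apply_symm_apply]
      rw [himg]
      apply sum_le_sum_topF (fun k => d (σ k)) hmono _ ab
      rw [Finset.card_image_of_injective _ σ.symm.injective, card_suffixF, hab]
    -- the nearest tight positions around ab
    set P : ℕ → Prop := fun a => a = 0 ∨ coefE q d σ a ≠ 0 with hP
    set A := Nat.findGreatest P ab with hA
    have hPA : P A := Nat.findGreatest_spec (Nat.zero_le ab) (Or.inl rfl)
    have hAab : A ≤ ab := Nat.findGreatest_le ab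
    have hAmax : ∀ a, A < a → a ≤ ab → coefE q d σ a = 0 := by
      intro a h1 h2
      have hnp := Nat.findGreatest_is_greatest h1 h2
      by_contra hcc
      exact hnp (Or.inr hcc)
    have hBex : ∃ b, ab ≤ b ∧ (b = q ∨ coefE q d σ b ≠ 0) := ⟨q, habq, Or.inl rfl⟩
    set B := Nat.find hBex with hB
    obtain ⟨habB, hQB⟩ := Nat.find_spec hBex
    have hBq : B ≤ q := Nat.find_min' hBex ⟨habq, Or.inl rfl⟩
    have hBmin : ∀ b, ab ≤ b → b < B → coefE q d σ b = 0 := by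
      intro b h1 h2
      have hnp := Nat.find_min hBex h2
      by_contra hcc
      exact hnp ⟨h1, Or.inr hcc⟩
    have hzero : ∀ a, A < a → a < B → coefE q d σ a = 0 := by
      intro a h1 h2
      rcases le_or_gt a ab with h | h
      · exact hAmax a h1 h
      · exact hBmin a (le_of_lt h) h2
    have hconstE := Eext_const_band d σ hzero
    set δ := Eext q d σ A with hδ
    have hbandsum : ∀ b, A ≤ b → b ≤ B → b ≤ q →
        ∑ k ∈ topF q A \ topF q b, d (σ k) = ((b - A : ℕ) : ℝ) * δ := by
      intro b hb1 hb2 hb3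
      have hval : ∀ k ∈ topF q A \ topF q b, d (σ k) = δ := by
        intro k hk
        have hk1 : A ≤ (k : ℕ) := mem_topF.mp (Finset.mem_sdiff.mp hk).1
        have hk2 : ¬ b ≤ (k : ℕ) := fun h => (Finset.mem_sdiff.mp hk).2 (mem_topF.mpr h)
        have hkB : (k : ℕ) < B := by omega
        have hE := hconstE (k : ℕ) hk1 hkB
        have hEd : Eext q d σ (k : ℕ) = d (σ k) := by
          unfold Eext
          rw [dif_pos k.isLt]
        rw [← hEd, hE]
      rw [Finset.sum_congr rfl hval, Finset.sum_const, card_band hb1 hb3, nsmul_eq_mul]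
    set D : ℕ → ℝ := fun a => ∑ k ∈ topF q a, d (σ k) with hD
    have hsplit : ∀ b, A ≤ b → b ≤ B → b ≤ q → D A = D b + ((b - A : ℕ) : ℝ) * δ := by
      intro b hb1 hb2 hb3
      rw [hD]
      simp only
      rw [sum_band (fun k => d (σ k)) hb1, hbandsum b hb1 hb2 hb3]
    have hDbound : ∀ a, a ≤ q → (a = 0 ∨ a = q ∨ coefE q d σ a ≠ 0) →
        D a ≤ (lam - κ) * Fval q a := by
      intro a ha hcase
      have hy := hTy a ha hcase
      have hcb : ∑ k ∈ topF q a, c (σ k) ≤ lam * Fval q a := by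
        rw [sum_topF_image]
        exact hcpartial _ a ha (card_topF_image σ a)
      have hDd : D a = ∑ k ∈ topF q a, c (σ k) - ∑ k ∈ topF q a, y (σ k) := by
        rw [hD]
        simp only
        rw [← Finset.sum_sub_distrib]
      rw [hDd, hy]
      linarith
    have hDA := hDbound A (le_trans hAab habq) (by
      rcases hPA with h | h
      · exact Or.inl h
      · exact Or.inr (Or.inr h))
    have hDB := hDbound B hBq (by
      rcases hQB with h | h
      · exact Or.inr (Or.inl h)
      · exact Or.inr (Or.inr h))
    have hEq1 := hsplit ab hAab habB habq
    have hEq2 := hsplit B (le_trans hAab habB) (le_refl B) hBq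
    have hAB : A ≤ B := le_trans hAab habB
    have hDab : D ab ≤ (lam - κ) * Fval q ab := by
      rcases eq_or_lt_of_le hAB with hABeq | hABlt
      · have habA : ab = A := by omega
        rw [habA]
        exact hDA
      · have hc1 : ((ab - A : ℕ) : ℝ) = (ab : ℝ) - (A : ℝ) := by
          rw [Nat.cast_sub hAab]
        have hc2 : ((B - A : ℕ) : ℝ) = (B : ℝ) - (A : ℝ) := by
          rw [Nat.cast_sub hAB]
        rw [hc1] at hEq1
        rw [hc2] at hEq2
        have hxy : (A : ℝ) ≤ (ab : ℝ) := by exact_mod_cast hAab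
        have hyz : (ab : ℝ) ≤ (B : ℝ) := by exact_mod_cast habB
        have hzq : (B : ℝ) ≤ (q : ℝ) := by exact_mod_cast hBq
        have hxz : (A : ℝ) < (B : ℝ) := by exact_mod_cast hABlt
        have hiden : ((B : ℝ) - A) * D ab
            = ((B : ℝ) - ab) * D A + ((ab : ℝ) - A) * D B := by
          linear_combination (-(((B : ℝ) - A))) * hEq1 + (((ab : ℝ) - A)) * hEq2
        have hconc : ((B : ℝ) - ab) * ((lam - κ) * Fval q A)
              + ((ab : ℝ) - A) * ((lam - κ) * Fval q B)
            ≤ ((B : ℝ) - A) * ((lam - κ) * Fval q ab) := by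
          have := concavity_aux (q : ℝ) (A : ℝ) (ab : ℝ) (B : ℝ) (lam - κ)
            (by linarith) hxy hyz
          simpa [Fval] using this
        have hstep : ((B : ℝ) - A) * D ab ≤ ((B : ℝ) - A) * ((lam - κ) * Fval q ab) := by
          rw [hiden]
          have t1 : ((B : ℝ) - ab) * D A ≤ ((B : ℝ) - ab) * ((lam - κ) * Fval q A) :=
            mul_le_mul_of_nonneg_left hDA (by linarith)
          have t2 : ((ab : ℝ) - A) * D B ≤ ((ab : ℝ) - A) * ((lam - κ) * Fval q B) :=
            mul_le_mul_of_nonneg_left hDB (by linarith)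
          linarith
        have hpos : (0 : ℝ) < (B : ℝ) - A := by linarith
        exact le_of_mul_le_mul_left hstep hpos
    have hsc : ∑ i ∈ suffixF J t, c i = lam * Fval q ab := hcsuffix t
    have hsd : ∑ i ∈ suffixF J t, d i
        = ∑ i ∈ suffixF J t, c i - ∑ i ∈ suffixF J t, y i := by
      rw [← Finset.sum_sub_distrib]
    have hlow : κ * Fval q ab ≤ ∑ i ∈ suffixF J t, y i := by
      have h1 : ∑ i ∈ suffixF J t, d i ≤ (lam - κ) * Fval q ab := le_trans hstep1 hDab
      rw [hsd, hsc] at h1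
      linarith
    linarith


/-- for `0 < κ ≤ λ`, the metric projection onto `κ·P^{q−1}` of any point
of the relative interior of `λ·τ_J` lies in the face `κ·τ_J`. -/
theorem metricProj_mem_scaled_face (q s : ℕ) (hq : 1 ≤ q)
    (κ lam : ℝ) (hκ : 0 < κ) (hκlam : κ ≤ lam)
    (J : OrderedPartition q s) (c : EuclideanSpace ℝ (Fin q))
    (hc : c ∈ intrinsicInterior ℝ (lam • face q s J)) :
    metricProj (κ • permutohedron q) c ∈ κ • face q s J := by
  classical
  have hlam : 0 < lam := lt_of_lt_of_le hκ hκlam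
  have hKcomp : IsCompact (κ • permutohedron q) := by
    rw [← Set.image_smul]
    exact (perm_compact q).image (continuous_const_smul κ)
  have hKne : (κ • permutohedron q).Nonempty := Set.Nonempty.smul_set (perm_nonempty q)
  have hKconv : Convex ℝ (κ • permutohedron q) := (perm_convex q).smul κ
  obtain ⟨hyK, hymin⟩ := metricProj_spec (κ • permutohedron q) hKcomp hKne c
  set y := metricProj (κ • permutohedron q) c with hy
  have hvar0 := variational hKconv hyK hymin
  -- facts about c
  have hcmem : c ∈ lam • face q s J := intrinsicInterior_subset hc
  obtain ⟨c₀, hc₀, hcc⟩ := Set.mem_smul_set.mp hcmem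
  have hc₀P : c₀ ∈ permutohedron q := face_subset_perm J hc₀
  have hci : ∀ i, c i = lam * c₀ i := by intro i; rw [← hcc]; rfl
  have hcsuffix : ∀ t, ∑ i ∈ suffixF J t, c i = lam * Fval q (cumCard J t) := by
    intro t
    rw [Finset.sum_congr rfl (fun i _ => hci i), ← Finset.mul_sum,
      face_suffix_sum hc₀ t]
  have hcpartial : ∀ (S : Finset (Fin q)) (a : ℕ), a ≤ q → S.card = q - a →
      ∑ i ∈ S, c i ≤ lam * Fval q a := by
    intro S a ha hS
    rw [Finset.sum_congr rfl (fun i _ => hci i), ← Finset.mul_sum]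
    exact mul_le_mul_of_nonneg_left (perm_partial_sum hc₀P S a ha hS) (le_of_lt hlam)
  -- facts about y
  obtain ⟨y₀, hy₀, hyy⟩ := Set.mem_smul_set.mp hyK
  have hyi : ∀ i, y i = κ * y₀ i := by intro i; rw [← hyy]; rfl
  have hypartial : ∀ (S : Finset (Fin q)) (a : ℕ), a ≤ q → S.card = q - a →
      ∑ i ∈ S, y i ≤ κ * Fval q a := by
    intro S a ha hS
    rw [Finset.sum_congr rfl (fun i _ => hyi i), ← Finset.mul_sum]
    exact mul_le_mul_of_nonneg_left (perm_partial_sum hy₀ S a ha hS) (le_of_lt hκ)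
  have hysum : ∑ i, y i = 0 := by
    rw [Finset.sum_congr rfl (fun i _ => hyi i), ← Finset.mul_sum, perm_total_sum hy₀]
    ring
  -- the key tightness result
  have hkey := y_suffix_tight κ lam hκ hκlam J c y hcsuffix hcpartial hypartial hysum hvar0
  -- conclude
  have hy₀face : y₀ ∈ face q s J := by
    apply mem_face_of_tight J hy₀
    intro t _
    have hk := hkey t
    have hsy : ∑ i ∈ suffixF J t, y i = κ * ∑ i ∈ suffixF J t, y₀ i := by
      rw [Finset.sum_congr rfl (fun i _ => hyi i), ← Finset.mul_sum]
    rw [hsy] at hk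
    exact mul_left_cancel₀ (ne_of_gt hκ) hk
  rw [← hyy]
  exact Set.smul_mem_smul_set hy₀face

end
end

section
/- Let 0 < κ ≤ λ, let J be an ordered partition of {1,…,q}, and let c ∈ relint(λ·τ_J). Then for every t ∈ (0, 1], the point (1 − t)·(λ/κ)·π_κ(c) + t·c belongs to relint(λ·τ_J). -/
open Set Pointwise

noncomputable section

lemma aux_mem_iff_lt_card {q : ℕ} {T : Finset (Fin q)}
    (hd : ∀ a b : Fin q, a ≤ b → b ∈ T → a ∈ T) (p : Fin q) :
    p ∈ T ↔ (p : ℕ) < T.card := by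
  constructor
  · intro hp
    have hsub : Finset.Iic p ⊆ T := fun x hx => hd x p (Finset.mem_Iic.1 hx) hp
    have := Finset.card_le_card hsub
    rw [Fin.card_Iic] at this; omega
  · intro hp
    by_contra hpT
    have hsub : T ⊆ Finset.Iio p := by
      intro x hx
      rw [Finset.mem_Iio]
      rcases lt_or_ge x p with h | h
      · exact h
      · exact absurd (hd p x h hx) hpT
    have := Finset.card_le_card hsub
    rw [Fin.card_Iio] at this; omega

section Partition
attribute [local instance] Classical.propDecidable

variable {q s : ℕ} (J : OrderedPartition q s)

/-- The index of the block containing `i`. -/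
def blockIdx (i : Fin q) : Fin s := (J.covers i).choose

lemma mem_blockIdx (i : Fin q) : i ∈ J.blocks (blockIdx J i) := (J.covers i).choose_spec

lemma blockIdx_eq_of_mem {i : Fin q} {k : Fin s} (h : i ∈ J.blocks k) : blockIdx J i = k := by
  by_contra hne
  exact Finset.disjoint_left.1 (J.disjoint _ _ hne) (mem_blockIdx J i) h

lemma mem_blocks_iff_blockIdx {i : Fin q} {k : Fin s} :
    i ∈ J.blocks k ↔ blockIdx J i = k :=
  ⟨blockIdx_eq_of_mem J, fun h => h ▸ mem_blockIdx J i⟩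

lemma cumCard_mono_s12 : Monotone (cumCard J) := by
  intro m n hmn
  apply Finset.sum_le_sum_of_subset
  intro i hi
  simp only [Finset.mem_filter] at hi ⊢
  exact ⟨hi.1, lt_of_lt_of_le hi.2 hmn⟩

lemma cumCard_succ (k : Fin s) :
    cumCard J ((k : ℕ) + 1) = cumCard J (k : ℕ) + (J.blocks k).card := by
  unfold cumCard
  have : Finset.univ.filter (fun i : Fin s => (i : ℕ) < (k : ℕ) + 1)
      = insert k (Finset.univ.filter (fun i : Fin s => (i : ℕ) < (k : ℕ))) := by
    ext i
    simp only [Finset.mem_filter, Finset.mem_insert, Finset.mem_univ, true_and]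
    constructor
    · intro h
      rcases Nat.lt_succ_iff_lt_or_eq.1 h with h | h
      · exact Or.inr h
      · exact Or.inl (Fin.ext h)
    · rintro (rfl | h)
      · omega
      · omega
  rw [this, Finset.sum_insert (by simp)]
  ring
lemma cumCard_total : cumCard J s = q := by
  unfold cumCard
  have hfil : Finset.univ.filter (fun i : Fin s => (i : ℕ) < s) = Finset.univ := by
    ext i; simp [i.isLt]
  rw [hfil]
  have hcover : Finset.univ.biUnion J.blocks = (Finset.univ : Finset (Fin q)) := by
    ext i
    simp only [Finset.mem_biUnion, Finset.mem_univ, true_and, iff_true]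
    exact J.covers i
  calc ∑ i : Fin s, (J.blocks i).card
      = (Finset.univ.biUnion J.blocks).card :=
        (Finset.card_biUnion (fun x _ y _ hxy => J.disjoint x y hxy)).symm
    _ = q := by rw [hcover, Finset.card_univ, Fintype.card_fin]

lemma cumCard_le_q (n : ℕ) (hn : n ≤ s) : cumCard J n ≤ q :=
  le_trans (cumCard_mono_s12 J hn) (le_of_eq (cumCard_total J))

lemma blockIdx_card_lt (n : ℕ) :
    (Finset.univ.filter (fun i : Fin q => (blockIdx J i : ℕ) < n)).card = cumCard J n := by
  have heq : Finset.univ.filter (fun i : Fin q => (blockIdx J i : ℕ) < n)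
      = (Finset.univ.filter (fun k : Fin s => (k : ℕ) < n)).biUnion J.blocks := by
    ext i
    simp only [Finset.mem_filter, Finset.mem_biUnion, Finset.mem_univ, true_and]
    constructor
    · intro h
      exact ⟨blockIdx J i, h, mem_blockIdx J i⟩
    · rintro ⟨k, hk, hik⟩
      rw [blockIdx_eq_of_mem J hik]
      exact hk
  rw [heq, Finset.card_biUnion (fun x _ y _ hxy => J.disjoint x y hxy)]
  rfl

/-- Uniqueness of the block range containing a given position. -/
lemma range_unique {k l : Fin s} {n : ℕ}
    (hk1 : cumCard J k ≤ n) (hk2 : n < cumCard J ((k : ℕ) + 1))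
    (hl1 : cumCard J l ≤ n) (hl2 : n < cumCard J ((l : ℕ) + 1)) : k = l := by
  by_contra hne
  rcases lt_or_gt_of_ne (fun h : (k : ℕ) = (l : ℕ) => hne (Fin.ext h)) with h | h
  · have := cumCard_mono_s12 J (show (k : ℕ) + 1 ≤ l by omega)
    omega
  · have := cumCard_mono_s12 J (show (l : ℕ) + 1 ≤ k by omega)
    omega

/-- Compatibility in terms of `blockIdx`. -/
lemma compatible_iff_blockIdx (π : Equiv.Perm (Fin q)) :
    compatiblePerm J π ↔ ∀ i : Fin q,
      cumCard J (blockIdx J (π i) : ℕ) ≤ (i : ℕ) ∧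
      (i : ℕ) < cumCard J ((blockIdx J (π i) : ℕ) + 1) := by
  constructor
  · intro h i
    exact (h (blockIdx J (π i)) i).1 (mem_blockIdx J (π i))
  · intro h k i
    constructor
    · intro hmem
      have := h i
      rwa [blockIdx_eq_of_mem J hmem] at this
    · intro hr
      have h2 := h i
      have : blockIdx J (π i) = k := range_unique J h2.1 h2.2 hr.1 hr.2
      rw [← this]
      exact mem_blockIdx J (π i)

/-- Construction: a compatible permutation sorting a given weight within blocks,
provided the weight is monotone across the blocks. -/
lemma exists_compatible_sorted (w : Fin q → ℝ)
    (hw : ∀ i j : Fin q, (blockIdx J i : ℕ) < (blockIdx J j : ℕ) → w i ≤ w j) :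
    ∃ τ : Equiv.Perm (Fin q), compatiblePerm J τ ∧ Monotone (fun pos => w (τ pos)) := by
  classical
  -- the lexicographic key
  set key : Fin q → Lex ((Fin s) × Lex (ℝ × Fin q)) :=
    fun i => toLex (blockIdx J i, toLex (w i, i)) with hkey
  have hinj : Function.Injective key := by
    intro i j h
    have h2 := congrArg (fun x => (ofLex x).2) h
    have h3 := congrArg (fun x => (ofLex x).2) h2
    exact h3
  haveI : Fintype (Set.range key) := Set.fintypeRange key
  have hcard : Fintype.card (Set.range key) = q := by
    rw [Set.card_range_of_injective hinj, Fintype.card_fin]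
  set e := monoEquivOfFin (Set.range key) hcard with he
  set τfun : Fin q → Fin q :=
    fun pos => (Equiv.ofInjective key hinj).symm ⟨(e pos : Lex _), (e pos).2⟩ with hτ
  have hkeyτ : ∀ pos, key (τfun pos) = (e pos : Lex ((Fin s) × Lex (ℝ × Fin q))) := by
    intro pos
    simp only [hτ]
    exact congrArg Subtype.val ((Equiv.ofInjective key hinj).apply_symm_apply _)
  have hτinj : Function.Injective τfun := by
    intro a b h
    have : key (τfun a) = key (τfun b) := congrArg key h
    rw [hkeyτ, hkeyτ] at this
    exact e.injective (Subtype.ext this)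
  have hτbij : Function.Bijective τfun := (Fintype.bijective_iff_injective_and_card τfun).2 ⟨hτinj, rfl⟩
  set τ := Equiv.ofBijective τfun hτbij with hτeq
  have hkeymono : ∀ a b : Fin q, a ≤ b → key (τ a) ≤ key (τ b) := by
    intro a b hab
    have : e a ≤ e b := e.monotone hab
    rw [show τ a = τfun a from rfl, show τ b = τfun b from rfl]
    rw [hkeyτ, hkeyτ]
    exact this
  -- monotone of blockIdx ∘ τ
  have hbmono : Monotone (fun pos => (blockIdx J (τ pos) : ℕ)) := by
    intro a b hab
    have h := hkeymono a b hab
    rcases (Prod.Lex.le_iff).1 h with h | h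
    · exact le_of_lt h
    · exact le_of_eq (congrArg _ h.1)
  -- counting: fibers
  have hlower : ∀ (n : ℕ) (i : Fin q),
      ((blockIdx J (τ i) : ℕ) < n) ↔ (i : ℕ) < cumCard J n := by
    intro n
    set T : Finset (Fin q) := Finset.univ.filter (fun i => (blockIdx J (τ i) : ℕ) < n) with hT
    have hdown : ∀ a b : Fin q, a ≤ b → b ∈ T → a ∈ T := by
      intro a b hab hb
      simp only [hT, Finset.mem_filter, Finset.mem_univ, true_and] at hb ⊢
      exact lt_of_le_of_lt (hbmono hab) hb
    have hcardT : T.card = cumCard J n := by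
      rw [hT, ← blockIdx_card_lt J n]
      apply Finset.card_bij (fun a _ => τ a)
      · intro a ha
        simp only [Finset.mem_filter, Finset.mem_univ, true_and] at ha ⊢
        exact ha
      · intro a _ b _ hab
        exact τ.injective hab
      · intro b hb
        refine ⟨τ.symm b, ?_, by simp⟩
        simp only [Finset.mem_filter, Finset.mem_univ, true_and,
          Equiv.apply_symm_apply] at hb ⊢
        exact hb
    intro i
    constructor
    · intro h
      have : i ∈ T := by simp [hT, h]
      rw [aux_mem_iff_lt_card hdown] at this
      rwa [hcardT] at this
    · intro h
      have : i ∈ T := by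
        rw [aux_mem_iff_lt_card hdown, hcardT]
        exact h
      simpa [hT] using this
  refine ⟨τ, ?_, ?_⟩
  · rw [compatible_iff_blockIdx]
    intro i
    constructor
    · by_contra h
      push_neg at h
      have := (hlower (blockIdx J (τ i) : ℕ) i).2 h
      omega
    · have := (hlower ((blockIdx J (τ i) : ℕ) + 1) i).1 (by omega)
      exact this
  · intro a b hab
    have h := hkeymono a b hab
    rcases (Prod.Lex.le_iff).1 h with h | h
    · exact hw _ _ h
    · rcases (Prod.Lex.le_iff).1 h.2 with h2 | h2
      · exact le_of_lt h2
      · exact le_of_eq h2.1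

/-- Existence of a compatible permutation. -/
lemma exists_compatible : ∃ τ : Equiv.Perm (Fin q), compatiblePerm J τ := by
  obtain ⟨τ, hτ, -⟩ := exists_compatible_sorted J (fun _ => 0) (fun _ _ _ => le_refl 0)
  exact ⟨τ, hτ⟩

/-- Swapping two positions within the same block range preserves compatibility. -/
lemma compatible_swap {ρ : Equiv.Perm (Fin q)} (hρ : compatiblePerm J ρ)
    {a b : Fin q} {k : Fin s}
    (ha : cumCard J k ≤ (a : ℕ) ∧ (a : ℕ) < cumCard J ((k : ℕ) + 1))
    (hb : cumCard J k ≤ (b : ℕ) ∧ (b : ℕ) < cumCard J ((k : ℕ) + 1)) :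
    compatiblePerm J (ρ * Equiv.swap a b) := by
  intro m i
  simp only [Equiv.Perm.mul_apply]
  rcases eq_or_ne i a with rfl | hia
  · rw [Equiv.swap_apply_left]
    rw [hρ m b]
    constructor
    · intro h
      have : m = k := range_unique J h.1 h.2 hb.1 hb.2
      subst this
      exact ha
    · intro h
      have : m = k := range_unique J h.1 h.2 ha.1 ha.2
      subst this
      exact hb
  · rcases eq_or_ne i b with rfl | hib
    · rw [Equiv.swap_apply_right]
      rw [hρ m a]
      constructor
      · intro h
        have : m = k := range_unique J h.1 h.2 ha.1 ha.2
        subst this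
        exact hb
      · intro h
        have : m = k := range_unique J h.1 h.2 hb.1 hb.2
        subst this
        exact ha
    · rw [Equiv.swap_apply_of_ne_of_ne hia hib]
      exact hρ m i

end Partition
open RealInnerProductSpace

section Vertex
variable {q : ℕ}
attribute [local instance] Classical.propDecidable

/-- The coordinate value attached to (0-indexed) position `n`. -/
def valN (q : ℕ) (n : ℕ) : ℝ := (n + 1 : ℝ) - ((q : ℝ) + 1) / 2

lemma valN_mono : Monotone (valN q) := by
  intro a b hab
  unfold valN
  have : (a : ℝ) ≤ b := Nat.cast_le.2 hab
  linarith

lemma valN_strictMono : StrictMono (valN q) := by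
  intro a b hab
  unfold valN
  have : (a : ℝ) < b := Nat.cast_lt.2 hab
  linarith

lemma vertexPoint_apply (ρ : Equiv.Perm (Fin q)) (i : Fin q) :
    vertexPoint q ρ i = valN q (ρ.symm i : ℕ) := rfl

lemma inner_eq_sum (w x : EuclideanSpace ℝ (Fin q)) : ⟪w, x⟫ = ∑ i, w i * x i := by
  simp [PiLp.inner_apply, RCLike.inner_apply, starRingEnd_apply, star_trivial]
  exact Finset.sum_congr rfl (fun i _ => mul_comm _ _)

lemma inner_vertex (w : EuclideanSpace ℝ (Fin q)) (ρ : Equiv.Perm (Fin q)) :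
    ⟪w, vertexPoint q ρ⟫ = ∑ pos : Fin q, w (ρ pos) * valN q (pos : ℕ) := by
  rw [inner_eq_sum]
  rw [← Equiv.sum_comp ρ (fun i => w i * vertexPoint q ρ i)]
  apply Finset.sum_congr rfl
  intro pos _
  rw [vertexPoint_apply, Equiv.symm_apply_apply]

/-- The indicator vector of a finset of coordinates. -/
def chi (q : ℕ) (T : Finset (Fin q)) : EuclideanSpace ℝ (Fin q) :=
  WithLp.toLp 2 (fun i => if i ∈ T then (1 : ℝ) else 0)

lemma inner_chi (T : Finset (Fin q)) (x : EuclideanSpace ℝ (Fin q)) :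
    ⟪chi q T, x⟫ = ∑ i ∈ T, x i := by
  rw [inner_eq_sum]
  have h1 : ∀ i ∈ Finset.univ, chi q T i * x i = if i ∈ T then x i else 0 := by
    intro i _
    unfold chi
    rw [PiLp.toLp_apply]
    split <;> simp
  rw [Finset.sum_congr rfl h1, Finset.sum_ite_mem, Finset.univ_inter]

lemma isLinearMap_inner (w : EuclideanSpace ℝ (Fin q)) :
    IsLinearMap ℝ (fun x : EuclideanSpace ℝ (Fin q) => ⟪w, x⟫) :=
  ⟨fun a b => inner_add_right w a b, fun r x => real_inner_smul_right w x r⟩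

lemma inner_le_of_mem_convexHull {S : Set (EuclideanSpace ℝ (Fin q))}
    {x w : EuclideanSpace ℝ (Fin q)} {b : ℝ} (hx : x ∈ convexHull ℝ S)
    (hb : ∀ y ∈ S, ⟪w, y⟫ ≤ b) : ⟪w, x⟫ ≤ b :=
  convexHull_min hb (convex_halfSpace_le (isLinearMap_inner w) b) hx

lemma inner_ge_of_mem_convexHull {S : Set (EuclideanSpace ℝ (Fin q))}
    {x w : EuclideanSpace ℝ (Fin q)} {b : ℝ} (hx : x ∈ convexHull ℝ S)
    (hb : ∀ y ∈ S, b ≤ ⟪w, y⟫) : b ≤ ⟪w, x⟫ :=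
  convexHull_min hb (convex_halfSpace_ge (isLinearMap_inner w) b) hx

/-- Gain of a transposition on the linear functional. -/
lemma swap_gain (w : Fin q → ℝ) (ρ : Equiv.Perm (Fin q)) {a b : Fin q} (hab : a ≠ b) :
    (∑ pos : Fin q, w ((ρ * Equiv.swap a b) pos) * valN q (pos : ℕ))
      - (∑ pos : Fin q, w (ρ pos) * valN q (pos : ℕ))
    = (w (ρ b) - w (ρ a)) * (valN q (a : ℕ) - valN q (b : ℕ)) := by
  rw [← Finset.sum_sub_distrib]
  have hvanish : ∀ pos ∈ Finset.univ, pos ∉ ({a, b} : Finset (Fin q)) →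
      w ((ρ * Equiv.swap a b) pos) * valN q (pos : ℕ) - w (ρ pos) * valN q (pos : ℕ) = 0 := by
    intro pos _ hpos
    simp only [Finset.mem_insert, Finset.mem_singleton, not_or] at hpos
    rw [Equiv.Perm.mul_apply, Equiv.swap_apply_of_ne_of_ne hpos.1 hpos.2]
    ring
  rw [← Finset.sum_subset (Finset.subset_univ ({a, b} : Finset (Fin q))) hvanish]
  rw [Finset.sum_pair hab]
  simp only [Equiv.Perm.mul_apply, Equiv.swap_apply_left, Equiv.swap_apply_right]
  ring

/-- Sum over a Fin-filter as a sum over an `Ico`. -/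
lemma sum_filter_fin (f : ℕ → ℝ) (lo hi : ℕ) (hhi : hi ≤ q) :
    ∑ pos ∈ Finset.univ.filter (fun pos : Fin q => lo ≤ (pos : ℕ) ∧ (pos : ℕ) < hi),
      f (pos : ℕ) = ∑ j ∈ Finset.Ico lo hi, f j := by
  rw [Finset.sum_filter]
  rw [Fin.sum_univ_eq_sum_range (fun n => if lo ≤ n ∧ n < hi then f n else 0) q]
  rw [← Finset.sum_filter]
  congr 1
  ext j
  simp only [Finset.mem_filter, Finset.mem_range, Finset.mem_Ico]
  omega

lemma card_filter_fin (lo hi : ℕ) (hhi : hi ≤ q) :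
    (Finset.univ.filter (fun pos : Fin q => lo ≤ (pos : ℕ) ∧ (pos : ℕ) < hi)).card
      = hi - lo := by
  rw [Finset.card_filter]
  rw [Fin.sum_univ_eq_sum_range (fun n => if lo ≤ n ∧ n < hi then 1 else 0) q]
  rw [← Finset.card_filter]
  have : (Finset.range q).filter (fun n => lo ≤ n ∧ n < hi) = Finset.Ico lo hi := by
    ext j
    simp only [Finset.mem_filter, Finset.mem_range, Finset.mem_Ico]
    omega
  rw [this, Nat.card_Ico]

end Vertex

-- PART5 BELOW
section TieSet
attribute [local instance] Classical.propDecidable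
open RealInnerProductSpace

variable {q s : ℕ} (J : OrderedPartition q s)

/-- Every compatible maximizer of the linear functional places the top tie-set of a
block at the top positions of the block's range. -/
lemma maximizer_tie_top (w : Fin q → ℝ) {ρ : Equiv.Perm (Fin q)} (hρ : compatiblePerm J ρ)
    (hmax : ∀ σ, compatiblePerm J σ →
      (∑ pos : Fin q, w (σ pos) * valN q (pos : ℕ)) ≤
        ∑ pos : Fin q, w (ρ pos) * valN q (pos : ℕ))
    (k : Fin s) {W : ℝ} (hWle : ∀ i ∈ J.blocks k, w i ≤ W) :
    ∑ i ∈ (J.blocks k).filter (fun i => w i = W), vertexPoint q ρ i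
      = ∑ j ∈ Finset.Ico
          (cumCard J ((k : ℕ) + 1) - ((J.blocks k).filter (fun i => w i = W)).card)
          (cumCard J ((k : ℕ) + 1)), valN q j := by
  set T := (J.blocks k).filter (fun i => w i = W) with hTdef
  set m := T.card with hmdef
  set c0 := cumCard J (k : ℕ) with hc0
  set c1 := cumCard J ((k : ℕ) + 1) with hc1
  have hTsub : T ⊆ J.blocks k := Finset.filter_subset _ _
  have hm_le : m ≤ (J.blocks k).card := Finset.card_le_card hTsub
  have hc01 : c1 = c0 + (J.blocks k).card := cumCard_succ J k
  have hc1q : c1 ≤ q := cumCard_le_q J _ (by omega)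
  have hrange : ∀ i ∈ J.blocks k,
      c0 ≤ (ρ.symm i : ℕ) ∧ (ρ.symm i : ℕ) < c1 := by
    intro i hi
    exact (hρ k (ρ.symm i)).1 (by rwa [Equiv.apply_symm_apply])
  set posSet := T.image (fun i => ρ.symm i) with hposdef
  have hcardpos : posSet.card = m :=
    Finset.card_image_of_injective _ (Equiv.injective _)
  set topseg := Finset.univ.filter
      (fun pos : Fin q => c1 - m ≤ (pos : ℕ) ∧ (pos : ℕ) < c1) with htopdef
  have hcardtop : topseg.card = m := by
    rw [htopdef, card_filter_fin _ _ hc1q]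
    omega
  have heqset : posSet = topseg := by
    by_contra hne
    obtain ⟨a, ha⟩ : (topseg \ posSet).Nonempty := by
      rw [Finset.sdiff_nonempty]
      intro hsub
      exact hne (Finset.eq_of_subset_of_card_le hsub (by omega)).symm
    obtain ⟨b, hb⟩ : (posSet \ topseg).Nonempty := by
      rw [Finset.sdiff_nonempty]
      intro hsub
      exact hne (Finset.eq_of_subset_of_card_le hsub (by omega))
    rw [Finset.mem_sdiff] at ha hb
    obtain ⟨j, hjT, hjb⟩ := Finset.mem_image.1 hb.1
    have hjblock : j ∈ J.blocks k := hTsub hjT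
    have hwj : w j = W := (Finset.mem_filter.1 hjT).2
    have hbrange : c0 ≤ (b : ℕ) ∧ (b : ℕ) < c1 := hjb ▸ hrange j hjblock
    have hbtop : (b : ℕ) < c1 - m := by
      have := hb.2
      rw [htopdef, Finset.mem_filter] at this
      push_neg at this
      have h2 := this (Finset.mem_univ b)
      omega
    have harange : c1 - m ≤ (a : ℕ) ∧ (a : ℕ) < c1 := by
      have := ha.1
      rw [htopdef, Finset.mem_filter] at this
      exact this.2
    have hac0 : c0 ≤ (a : ℕ) := by omega
    have hablock : c0 ≤ (a : ℕ) ∧ (a : ℕ) < c1 := ⟨hac0, harange.2⟩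
    set i := ρ a with hidef
    have hiblock : i ∈ J.blocks k := (hρ k a).2 hablock
    have hiT : i ∉ T := by
      intro hiT
      apply ha.2
      rw [hposdef]
      exact Finset.mem_image.2 ⟨i, hiT, by rw [hidef, Equiv.symm_apply_apply]⟩
    have hwi : w i < W := by
      rcases lt_or_eq_of_le (hWle i hiblock) with h | h
      · exact h
      · exact absurd (Finset.mem_filter.2 ⟨hiblock, h⟩) hiT
    have hba : (b : ℕ) < (a : ℕ) := by omega
    have hab : a ≠ b := by
      intro h
      rw [h] at hba
      omega
    have hcomp' : compatiblePerm J (ρ * Equiv.swap a b) :=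
      compatible_swap J hρ hablock hbrange
    have hgain := swap_gain w ρ hab
    have hρb : ρ b = j := by rw [← hjb, Equiv.apply_symm_apply]
    have hvlt : valN q (b : ℕ) < valN q (a : ℕ) := valN_strictMono hba
    have hpos : (0:ℝ) < (w (ρ b) - w (ρ a)) * (valN q (a : ℕ) - valN q (b : ℕ)) := by
      rw [hρb, ← hidef]
      have h1 : w i < w j := by rw [hwj]; exact hwi
      nlinarith
    have := hmax _ hcomp'
    linarith
  calc ∑ i ∈ T, vertexPoint q ρ i
      = ∑ i ∈ T, valN q ((ρ.symm i : Fin q) : ℕ) := by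
        apply Finset.sum_congr rfl
        intro i _
        rw [vertexPoint_apply]
    _ = ∑ pos ∈ posSet, valN q (pos : ℕ) := by
        rw [hposdef, Finset.sum_image]
        intro x _ y _ hxy
        exact (Equiv.injective _) hxy
    _ = ∑ pos ∈ topseg, valN q (pos : ℕ) := by rw [heqset]
    _ = ∑ j ∈ Finset.Ico (c1 - m) c1, valN q j := by
        rw [htopdef]
        exact sum_filter_fin (valN q) (c1 - m) c1 hc1q

/-- Every compatible maximizer places the bottom tie-set of a block at the bottom
positions of the block's range. -/
lemma maximizer_tie_bot (w : Fin q → ℝ) {ρ : Equiv.Perm (Fin q)} (hρ : compatiblePerm J ρ)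
    (hmax : ∀ σ, compatiblePerm J σ →
      (∑ pos : Fin q, w (σ pos) * valN q (pos : ℕ)) ≤
        ∑ pos : Fin q, w (ρ pos) * valN q (pos : ℕ))
    (k : Fin s) {W : ℝ} (hWge : ∀ i ∈ J.blocks k, W ≤ w i) :
    ∑ i ∈ (J.blocks k).filter (fun i => w i = W), vertexPoint q ρ i
      = ∑ j ∈ Finset.Ico (cumCard J (k : ℕ))
          (cumCard J (k : ℕ) + ((J.blocks k).filter (fun i => w i = W)).card), valN q j := by
  set T := (J.blocks k).filter (fun i => w i = W) with hTdef
  set m := T.card with hmdef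
  set c0 := cumCard J (k : ℕ) with hc0
  set c1 := cumCard J ((k : ℕ) + 1) with hc1
  have hTsub : T ⊆ J.blocks k := Finset.filter_subset _ _
  have hm_le : m ≤ (J.blocks k).card := Finset.card_le_card hTsub
  have hc01 : c1 = c0 + (J.blocks k).card := cumCard_succ J k
  have hc1q : c1 ≤ q := cumCard_le_q J _ (by omega)
  have hc0mq : c0 + m ≤ q := by omega
  have hrange : ∀ i ∈ J.blocks k,
      c0 ≤ (ρ.symm i : ℕ) ∧ (ρ.symm i : ℕ) < c1 := by
    intro i hi
    exact (hρ k (ρ.symm i)).1 (by rwa [Equiv.apply_symm_apply])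
  set posSet := T.image (fun i => ρ.symm i) with hposdef
  have hcardpos : posSet.card = m :=
    Finset.card_image_of_injective _ (Equiv.injective _)
  set botseg := Finset.univ.filter
      (fun pos : Fin q => c0 ≤ (pos : ℕ) ∧ (pos : ℕ) < c0 + m) with hbotdef
  have hcardbot : botseg.card = m := by
    rw [hbotdef, card_filter_fin _ _ hc0mq]
    omega
  have heqset : posSet = botseg := by
    by_contra hne
    obtain ⟨a, ha⟩ : (botseg \ posSet).Nonempty := by
      rw [Finset.sdiff_nonempty]
      intro hsub
      exact hne (Finset.eq_of_subset_of_card_le hsub (by omega)).symm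
    obtain ⟨b, hb⟩ : (posSet \ botseg).Nonempty := by
      rw [Finset.sdiff_nonempty]
      intro hsub
      exact hne (Finset.eq_of_subset_of_card_le hsub (by omega))
    rw [Finset.mem_sdiff] at ha hb
    obtain ⟨j, hjT, hjb⟩ := Finset.mem_image.1 hb.1
    have hjblock : j ∈ J.blocks k := hTsub hjT
    have hwj : w j = W := (Finset.mem_filter.1 hjT).2
    have hbrange : c0 ≤ (b : ℕ) ∧ (b : ℕ) < c1 := hjb ▸ hrange j hjblock
    have hbbot : c0 + m ≤ (b : ℕ) := by
      have := hb.2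
      rw [hbotdef, Finset.mem_filter] at this
      push_neg at this
      have h2 := this (Finset.mem_univ b)
      omega
    have harange : c0 ≤ (a : ℕ) ∧ (a : ℕ) < c0 + m := by
      have := ha.1
      rw [hbotdef, Finset.mem_filter] at this
      exact this.2
    have hablock : c0 ≤ (a : ℕ) ∧ (a : ℕ) < c1 := ⟨harange.1, by omega⟩
    set i := ρ a with hidef
    have hiblock : i ∈ J.blocks k := (hρ k a).2 hablock
    have hiT : i ∉ T := by
      intro hiT
      apply ha.2
      rw [hposdef]
      exact Finset.mem_image.2 ⟨i, hiT, by rw [hidef, Equiv.symm_apply_apply]⟩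
    have hwi : W < w i := by
      rcases lt_or_eq_of_le (hWge i hiblock) with h | h
      · exact h
      · exact absurd (Finset.mem_filter.2 ⟨hiblock, h.symm⟩) hiT
    have hba : (a : ℕ) < (b : ℕ) := by omega
    have hab : a ≠ b := by
      intro h
      rw [h] at hba
      omega
    have hcomp' : compatiblePerm J (ρ * Equiv.swap a b) :=
      compatible_swap J hρ hablock hbrange
    have hgain := swap_gain w ρ hab
    have hρb : ρ b = j := by rw [← hjb, Equiv.apply_symm_apply]
    have hvlt : valN q (a : ℕ) < valN q (b : ℕ) := valN_strictMono hba
    have hpos : (0:ℝ) < (w (ρ b) - w (ρ a)) * (valN q (a : ℕ) - valN q (b : ℕ)) := by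
      rw [hρb, ← hidef]
      have h1 : w j < w i := by rw [hwj]; exact hwi
      nlinarith
    have := hmax _ hcomp'
    linarith
  calc ∑ i ∈ T, vertexPoint q ρ i
      = ∑ i ∈ T, valN q ((ρ.symm i : Fin q) : ℕ) := by
        apply Finset.sum_congr rfl
        intro i _
        rw [vertexPoint_apply]
    _ = ∑ pos ∈ posSet, valN q (pos : ℕ) := by
        rw [hposdef, Finset.sum_image]
        intro x _ y _ hxy
        exact (Equiv.injective _) hxy
    _ = ∑ pos ∈ botseg, valN q (pos : ℕ) := by rw [heqset]
    _ = ∑ j ∈ Finset.Ico c0 (c0 + m), valN q j := by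
        rw [hbotdef]
        exact sum_filter_fin (valN q) c0 (c0 + m) hc0mq

end TieSet

section MoreHelpers
variable {E : Type*} [NormedAddCommGroup E] [InnerProductSpace ℝ E]


variable {E : Type*} [NormedAddCommGroup E] [InnerProductSpace ℝ E]

/-- Variational inequality for a distance minimizer over a convex set. -/
lemma aux_variational {K : Set E} (hK : Convex ℝ K) {c p : E} (hp : p ∈ K)
    (hmin : ∀ z ∈ K, dist c p ≤ dist c z) :
    ∀ z ∈ K, inner ℝ (c - p) (z - p) ≤ (0 : ℝ) := by
  intro z hz
  by_contra hI'
  push_neg at hI'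
  set I : ℝ := inner ℝ (c - p) (z - p) with hIdef
  have hzp : ¬ (z - p = 0) := by
    intro h
    rw [hIdef] at hI'
    rw [h, inner_zero_right] at hI'
    exact lt_irrefl 0 hI'
  have hN : (0 : ℝ) < ‖z - p‖ ^ 2 := by
    have : 0 < ‖z - p‖ := norm_pos_iff.2 hzp
    positivity
  set N : ℝ := ‖z - p‖ ^ 2 with hNdef
  set θ : ℝ := min 1 (I / N) with hθdef
  have hθ0 : 0 < θ := lt_min one_pos (div_pos hI' hN)
  have hθ1 : θ ≤ 1 := min_le_left _ _
  have hkey : θ * N ≤ I := by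
    have h1 : θ ≤ I / N := min_le_right _ _
    calc θ * N ≤ (I / N) * N := by nlinarith
    _ = I := by field_simp
  set zθ : E := (1 - θ) • p + θ • z with hzθdef
  have hzθK : zθ ∈ K := hK hp hz (by linarith) (le_of_lt hθ0) (by ring)
  have hexp : ‖c - zθ‖ ^ 2 = ‖c - p‖ ^ 2 - 2 * θ * I + θ ^ 2 * N := by
    have h1 : c - zθ = (c - p) - θ • (z - p) := by
      rw [hzθdef]; module
    rw [h1, norm_sub_sq_real, real_inner_smul_right, norm_smul]
    rw [hIdef, hNdef]
    rw [mul_pow, Real.norm_eq_abs, sq_abs]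
    ring
  have hlt2 : ‖c - zθ‖ ^ 2 < ‖c - p‖ ^ 2 := by
    rw [hexp]
    nlinarith
  have hlt : dist c zθ < dist c p := by
    rw [dist_eq_norm, dist_eq_norm]
    exact lt_of_pow_lt_pow_left₀ 2 (norm_nonneg _) hlt2
  exact absurd (hmin _ hzθK) (not_le.2 hlt)

/-- Uniqueness from two variational inequalities. -/
lemma aux_proj_unique {K : Set E} {c p p' : E} (hp : p ∈ K) (hp' : p' ∈ K)
    (h1 : ∀ z ∈ K, inner ℝ (c - p) (z - p) ≤ (0 : ℝ))
    (h2 : ∀ z ∈ K, inner ℝ (c - p') (z - p') ≤ (0 : ℝ)) : p = p' := by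
  have ha := h1 p' hp'
  have hb := h2 p hp
  have hc' : inner ℝ (p - p') (p - p') ≤ (0 : ℝ) := by
    have h3 : inner ℝ (c - p') (p - p') - inner ℝ (c - p) (p - p') ≤ (0:ℝ) := by
      have : inner ℝ (c - p) (p - p') = -(inner ℝ (c - p) (p' - p) : ℝ) := by
        rw [← inner_neg_right]; congr 1; abel
      rw [this] at *
      linarith
    rw [← inner_sub_left] at h3
    have : c - p' - (c - p) = p - p' := by abel
    rwa [this] at h3
  have := real_inner_self_nonpos.1 hc'
  have : p - p' = 0 := this
  have := sub_eq_zero.1 this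
  exact this

/-- Variational inequality implies distance minimality. -/
lemma aux_vi_min {K : Set E} {c p : E} (h1 : ∀ z ∈ K, inner ℝ (c - p) (z - p) ≤ (0 : ℝ)) :
    ∀ z ∈ K, dist c p ≤ dist c z := by
  intro z hz
  have hexp : ‖c - z‖ ^ 2 = ‖c - p‖ ^ 2 - 2 * inner ℝ (c - p) (z - p) + ‖z - p‖ ^ 2 := by
    have h : c - z = (c - p) - (z - p) := by abel
    rw [h, norm_sub_sq_real]
  have h2 : ‖c - p‖ ^ 2 ≤ ‖c - z‖ ^ 2 := by
    have := h1 z hz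
    nlinarith [sq_nonneg ‖z - p‖]
  rw [dist_eq_norm, dist_eq_norm]
  nlinarith [norm_nonneg (c - p), norm_nonneg (c - z)]


end MoreHelpers
section MoreHelpers2
/-- Sum of a monotone function over an `m`-subset of `[0,b)` is at most the sum
over the top segment `[b-m, b)`. -/
lemma aux_sum_le_top (f : ℕ → ℝ) (hf : Monotone f) :
    ∀ (m b : ℕ) (S : Finset ℕ), (∀ j ∈ S, j < b) → S.card = m →
      ∑ j ∈ S, f j ≤ ∑ j ∈ Finset.Ico (b - m) b, f j := by
  intro m
  induction m with
  | zero =>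
    intro b S hS hcard
    rw [Finset.card_eq_zero.1 hcard]
    simp
  | succ n ih =>
    intro b S hS hcard
    have hne : S.Nonempty := Finset.card_pos.1 (by omega)
    set M := S.max' hne with hM
    have hMmem : M ∈ S := S.max'_mem hne
    have hMb : M < b := hS M hMmem
    have hb1 : 1 ≤ b := by omega
    have hS' : ∀ j ∈ S.erase M, j < b - 1 := by
      intro j hj
      have hjM : j ≤ M := S.le_max' j (Finset.mem_of_mem_erase hj)
      have : j ≠ M := Finset.ne_of_mem_erase hj
      omega
    have hcard' : (S.erase M).card = n := by
      rw [Finset.card_erase_of_mem hMmem]; omega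
    have h1 := ih (b - 1) (S.erase M) hS' hcard'
    have hsplit : ∑ j ∈ S, f j = ∑ j ∈ S.erase M, f j + f M := by
      rw [Finset.sum_erase_add _ _ hMmem]
    have htop : ∑ j ∈ Finset.Ico (b - (n + 1)) b, f j
        = ∑ j ∈ Finset.Ico (b - (n + 1)) (b - 1), f j + f (b - 1) := by
      have hb' : b = (b - 1) + 1 := by omega
      rw [hb']
      rw [Finset.sum_Ico_succ_top (by omega)]
      congr 2 <;> omega
    have hbn : b - 1 - n = b - (n + 1) := by omega
    rw [hbn] at h1
    have hfM : f M ≤ f (b - 1) := hf (by omega)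
    rw [hsplit, htop]
    linarith
/-- Sum of a monotone function over an `m`-subset of `[a,∞)` is at least the sum
over the bottom segment `[a, a+m)`. -/
lemma aux_sum_ge_bot (f : ℕ → ℝ) (hf : Monotone f) :
    ∀ (m a : ℕ) (S : Finset ℕ), (∀ j ∈ S, a ≤ j) → S.card = m →
      ∑ j ∈ Finset.Ico a (a + m), f j ≤ ∑ j ∈ S, f j := by
  intro m
  induction m with
  | zero =>
    intro a S hS hcard
    rw [Finset.card_eq_zero.1 hcard]
    simp
  | succ n ih =>
    intro a S hS hcard
    have hne : S.Nonempty := Finset.card_pos.1 (by omega)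
    set M := S.min' hne with hM
    have hMmem : M ∈ S := S.min'_mem hne
    have haM : a ≤ M := hS M hMmem
    have hS' : ∀ j ∈ S.erase M, a + 1 ≤ j := by
      intro j hj
      have hjM : M ≤ j := S.min'_le j (Finset.mem_of_mem_erase hj)
      have : j ≠ M := Finset.ne_of_mem_erase hj
      omega
    have hcard' : (S.erase M).card = n := by
      rw [Finset.card_erase_of_mem hMmem]; omega
    have h1 := ih (a + 1) (S.erase M) hS' hcard'
    have hsplit : ∑ j ∈ S, f j = ∑ j ∈ S.erase M, f j + f M := by
      rw [Finset.sum_erase_add _ _ hMmem]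
    have hidx : a + 1 + n = a + (n + 1) := by omega
    rw [hidx] at h1
    have hbot : ∑ j ∈ Finset.Ico a (a + (n + 1)), f j
        = f a + ∑ j ∈ Finset.Ico (a + 1) (a + (n + 1)), f j := by
      rw [Finset.sum_eq_sum_Ico_succ_bot (by omega)]
    have hfa : f a ≤ f M := hf haM
    rw [hsplit, hbot]
    linarith

/-- In a convex combination achieving the max, every point with positive weight achieves it. -/
lemma aux_eq_max_of_sum {ι : Type*} {t : Finset ι} {a g : ι → ℝ} {M : ℝ}
    (h0 : ∀ i ∈ t, 0 ≤ a i) (h1 : ∑ i ∈ t, a i = 1)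
    (hle : ∀ i ∈ t, g i ≤ M) (heq : ∑ i ∈ t, a i * g i = M) :
    ∀ i ∈ t, a i ≠ 0 → g i = M := by
  intro i hi hai
  by_contra hgi
  have hlt : a i * g i < a i * M :=
    mul_lt_mul_of_pos_left (lt_of_le_of_ne (hle i hi) hgi)
      (lt_of_le_of_ne (h0 i hi) (Ne.symm hai))
  have hsum : ∑ j ∈ t, a j * g j < ∑ j ∈ t, a j * M :=
    Finset.sum_lt_sum (fun j hj => mul_le_mul_of_nonneg_left (hle j hj) (h0 j hj)) ⟨i, hi, hlt⟩
  rw [← Finset.sum_mul, h1, one_mul] at hsum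
  exact absurd heq (ne_of_lt hsum)

/-- Combination of a point of a convex set with a point of its intrinsic interior. -/
lemma aux_combo_mem_intrinsicInterior {V : Type*} [NormedAddCommGroup V] [NormedSpace ℝ V]
    {S : Set V} (hS : Convex ℝ S) {x y : V} (hx : x ∈ S)
    (hy : y ∈ intrinsicInterior ℝ S) {t : ℝ} (ht0 : 0 < t) (ht1 : t ≤ 1) :
    (1 - t) • x + t • y ∈ intrinsicInterior ℝ S := by
  obtain ⟨y', hy', hyy⟩ := mem_intrinsicInterior.1 hy
  obtain ⟨U, hUopen, hUeq⟩ := isOpen_induced_iff.1 (isOpen_interior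
    (s := ((↑) ⁻¹' S : Set (affineSpan ℝ S))))
  have hyU : y ∈ U := by
    rw [← hyy]
    have : y' ∈ ((↑) ⁻¹' U : Set (affineSpan ℝ S)) := by rw [hUeq]; exact hy'
    exact this
  obtain ⟨ε, hε, hball⟩ := Metric.isOpen_iff.1 hUopen y hyU
  have hP : ∀ v : V, v ∈ affineSpan ℝ S → dist v y < ε → v ∈ S := by
    intro v hvA hvd
    have hm : (⟨v, hvA⟩ : affineSpan ℝ S) ∈ ((↑) ⁻¹' U : Set (affineSpan ℝ S)) :=
      hball (by simpa [Metric.mem_ball] using hvd)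
    rw [hUeq] at hm
    exact Set.mem_preimage.1 (interior_subset hm)
  have hxA : x ∈ affineSpan ℝ S := subset_affineSpan ℝ S hx
  have hyA : y ∈ affineSpan ℝ S := subset_affineSpan ℝ S (intrinsicInterior_subset hy)
  set z := (1 - t) • x + t • y with hzdef
  have hzA : z ∈ affineSpan ℝ S := by
    have hmem := AffineSubspace.smul_vsub_vadd_mem (affineSpan ℝ S) t hyA hxA hxA
    have hzeq : t • (y -ᵥ x) +ᵥ x = z := by
      rw [hzdef]; simp only [vsub_eq_sub, vadd_eq_add]; module
    rwa [hzeq] at hmem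
  rw [mem_intrinsicInterior]
  refine ⟨⟨z, hzA⟩, ?_, rfl⟩
  have hop : IsOpen ((↑) ⁻¹' (Metric.ball z (t * ε)) : Set (affineSpan ℝ S)) :=
    Metric.isOpen_ball.preimage continuous_subtype_val
  have hsub : ((↑) ⁻¹' (Metric.ball z (t * ε)) : Set (affineSpan ℝ S)) ⊆ (↑) ⁻¹' S := by
    rintro ⟨v, hvA⟩ hv
    simp only [Set.mem_preimage, Metric.mem_ball] at hv ⊢
    set y'' := y + t⁻¹ • (v - z) with hy''def
    have hy''A : y'' ∈ affineSpan ℝ S := by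
      have hmem := AffineSubspace.smul_vsub_vadd_mem (affineSpan ℝ S) t⁻¹ hvA hzA hyA
      have : t⁻¹ • (v -ᵥ z) +ᵥ y = y'' := by
        rw [hy''def]; simp only [vsub_eq_sub, vadd_eq_add]; module
      rwa [this] at hmem
    have hy''S : y'' ∈ S := by
      apply hP _ hy''A
      have hdy : dist y'' y = t⁻¹ * ‖v - z‖ := by
        rw [hy''def, dist_eq_norm]
        simp only [add_sub_cancel_left]
        rw [norm_smul, Real.norm_eq_abs, abs_of_pos (inv_pos.2 ht0)]
      rw [hdy]
      have h2 : ‖v - z‖ < t * ε := by rw [← dist_eq_norm]; exact hv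
      calc t⁻¹ * ‖v - z‖ < t⁻¹ * (t * ε) :=
            mul_lt_mul_of_pos_left h2 (inv_pos.2 ht0)
        _ = ε := by field_simp
    have hcomb : v = (1 - t) • x + t • y'' := by
      rw [hy''def, smul_add, smul_smul, mul_inv_cancel₀ (ne_of_gt ht0), one_smul, hzdef]
      module
    rw [hcomb]
    exact hS hx hy''S (by linarith) (le_of_lt ht0) (by ring)
  have hzmem : (⟨z, hzA⟩ : affineSpan ℝ S) ∈
      ((↑) ⁻¹' (Metric.ball z (t * ε)) : Set (affineSpan ℝ S)) := by
    simp only [Set.mem_preimage, Metric.mem_ball, dist_self]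
    positivity
  exact interior_maximal hsub hop hzmem


end MoreHelpers2

-- PART6 BELOW
section BlockBound
attribute [local instance] Classical.propDecidable
open RealInnerProductSpace

variable {q s : ℕ}

/-- Upper bound for the coordinates of `c - p` on a block. -/
lemma block_bound_top (J : OrderedPartition q s) {κ lam : ℝ} (hκ : 0 < κ)
    (hκlam : κ ≤ lam) {c p : EuclideanSpace ℝ (Fin q)}
    (hcf : c ∈ lam • face q s J) (hpK : p ∈ κ • face q s J)
    (hVI : ∀ z ∈ κ • face q s J, inner ℝ (c - p) (z - p) ≤ (0 : ℝ)) (k : Fin s) :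
    ∀ i₀ ∈ J.blocks k,
      (c - p) i₀ ≤ (lam - κ) * valN q (cumCard J ((k : ℕ) + 1) - 1) := by
  classical
  have hlam : 0 < lam := lt_of_lt_of_le hκ hκlam
  set w : EuclideanSpace ℝ (Fin q) := c - p with hw
  set wf : Fin q → ℝ := fun i => w i with hwf
  set Wtop := (J.blocks k).sup' (J.nonempty k) wf with hWtop
  set T := (J.blocks k).filter (fun i => wf i = Wtop) with hT
  obtain ⟨istar, histar, histar2⟩ := Finset.exists_mem_eq_sup' (J.nonempty k) wf
  have histarT : istar ∈ T := Finset.mem_filter.2 ⟨histar, histar2.symm⟩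
  set m := T.card with hm
  have hm1 : 1 ≤ m := Finset.card_pos.2 ⟨istar, histarT⟩
  set c0 := cumCard J (k : ℕ) with hc0
  set c1 := cumCard J ((k : ℕ) + 1) with hc1
  have hTsub : T ⊆ J.blocks k := Finset.filter_subset _ _
  have hmle : m ≤ (J.blocks k).card := Finset.card_le_card hTsub
  have hc01 : c1 = c0 + (J.blocks k).card := cumCard_succ J k
  have hc1q : c1 ≤ q := cumCard_le_q J _ (by omega)
  set B := ∑ j ∈ Finset.Ico (c1 - m) c1, valN q j with hB
  -- vertex bound for the functional `chi T`
  have hvert : ∀ y ∈ {x | ∃ π : Equiv.Perm (Fin q), compatiblePerm J π ∧ x = vertexPoint q π},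
      ⟪chi q T, y⟫ ≤ B := by
    rintro y ⟨σ, hσ, rfl⟩
    rw [inner_chi]
    have hinj : Function.Injective (fun i : Fin q => ((σ.symm i : Fin q) : ℕ)) :=
      Fin.val_injective.comp σ.symm.injective
    have hsum : ∑ i ∈ T, vertexPoint q σ i
        = ∑ j ∈ T.image (fun i => ((σ.symm i : Fin q) : ℕ)), valN q j := by
      rw [Finset.sum_image (fun x _ y _ h => hinj h)]
      exact Finset.sum_congr rfl (fun i _ => vertexPoint_apply σ i)
    rw [hsum]
    apply aux_sum_le_top (valN q) valN_mono m c1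
    · intro j hj
      obtain ⟨i, hiT, rfl⟩ := Finset.mem_image.1 hj
      have hib : i ∈ J.blocks k := hTsub hiT
      have := (hσ k (σ.symm i)).1 (by rwa [Equiv.apply_symm_apply])
      exact this.2
    · rw [Finset.card_image_of_injective _ hinj]
  -- bound for c
  obtain ⟨xc, hxcF, hxc⟩ := Set.mem_smul_set.1 hcf
  have hxcB : ⟪chi q T, xc⟫ ≤ B := inner_le_of_mem_convexHull hxcF hvert
  have hTc : ⟪chi q T, c⟫ ≤ lam * B := by
    rw [← hxc, real_inner_smul_right]
    exact mul_le_mul_of_nonneg_left hxcB (le_of_lt hlam)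
  -- exact value for p
  obtain ⟨xp, hxpF, hxp⟩ := Set.mem_smul_set.1 hpK
  have hxpF' := hxpF
  rw [face, convexHull_eq] at hxpF'
  obtain ⟨ι, tf, a, z, h0, h1, hzFV, hcm⟩ := hxpF'
  have hxsum : xp = ∑ i ∈ tf, a i • z i := by
    rw [← hcm, Finset.centerMass_eq_of_sum_1 _ _ h1]
  set Mb : ℝ := ⟪w, xp⟫ with hMb
  have hwp : ⟪w, p⟫ = κ * Mb := by rw [hMb, ← hxp, real_inner_smul_right]
  have hcompatle : ∀ σ, compatiblePerm J σ → ⟪w, vertexPoint q σ⟫ ≤ Mb := by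
    intro σ hσ
    have hzK : κ • vertexPoint q σ ∈ κ • face q s J :=
      Set.smul_mem_smul_set (subset_convexHull ℝ _ ⟨σ, hσ, rfl⟩)
    have h2 := hVI _ hzK
    rw [inner_sub_right, real_inner_smul_right, hwp] at h2
    nlinarith
  have hMsum : ∑ i ∈ tf, a i * ⟪w, z i⟫ = Mb := by
    rw [hMb, hxsum, inner_sum]
    apply Finset.sum_congr rfl
    intro i _
    rw [real_inner_smul_right]
  have hgle : ∀ i ∈ tf, ⟪w, z i⟫ ≤ Mb := by
    intro i hi
    obtain ⟨σ, hσc, hzi⟩ := hzFV i hi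
    rw [hzi]
    exact hcompatle σ hσc
  have hsupp := aux_eq_max_of_sum h0 h1 hgle hMsum
  have hWle : ∀ i ∈ J.blocks k, wf i ≤ Wtop := fun i hi => Finset.le_sup' wf hi
  have hzB : ∀ i ∈ tf, a i * ⟪chi q T, z i⟫ = a i * B := by
    intro i hi
    rcases eq_or_ne (a i) 0 with h | h
    · rw [h, zero_mul, zero_mul]
    · obtain ⟨σ, hσc, hzi⟩ := hzFV i hi
      have hgmax : ⟪w, vertexPoint q σ⟫ = Mb := by
        rw [← hzi]
        exact hsupp i hi h
      have hφmax : ∀ σ', compatiblePerm J σ' →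
          (∑ pos : Fin q, wf (σ' pos) * valN q (pos : ℕ)) ≤
            ∑ pos : Fin q, wf (σ pos) * valN q (pos : ℕ) := by
        intro σ' hσ'
        have e1 : ∑ pos : Fin q, wf (σ' pos) * valN q (pos : ℕ)
            = ⟪w, vertexPoint q σ'⟫ := (inner_vertex w σ').symm
        have e2 : ∑ pos : Fin q, wf (σ pos) * valN q (pos : ℕ)
            = ⟪w, vertexPoint q σ⟫ := (inner_vertex w σ).symm
        rw [e1, e2, hgmax]
        exact hcompatle σ' hσ'
      have htie := maximizer_tie_top J wf hσc hφmax k (W := Wtop) hWle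
      have : ⟪chi q T, z i⟫ = B := by
        rw [hzi, inner_chi, hT, htie]
      rw [this]
  have hTp : ⟪chi q T, p⟫ = κ * B := by
    rw [← hxp, real_inner_smul_right, hxsum, inner_sum]
    have h2 : ∑ i ∈ tf, ⟪chi q T, a i • z i⟫ = ∑ i ∈ tf, a i * B := by
      apply Finset.sum_congr rfl
      intro i hi
      rw [real_inner_smul_right]
      exact hzB i hi
    rw [h2, ← Finset.sum_mul, h1, one_mul]
  -- combine
  have hTw : ∑ i ∈ T, w i ≤ (lam - κ) * B := by
    have h3 : ⟪chi q T, w⟫ = ⟪chi q T, c⟫ - ⟪chi q T, p⟫ := by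
      rw [hw, inner_sub_right]
    have h4 := inner_chi T w
    rw [h3, hTp] at h4
    rw [← h4]
    linarith
  have hsumT : ∑ i ∈ T, w i = (m : ℝ) * Wtop := by
    have : ∀ i ∈ T, w i = Wtop := fun i hi => (Finset.mem_filter.1 hi).2
    rw [Finset.sum_congr rfl this, Finset.sum_const, hm, nsmul_eq_mul]
  have hcardIco : (Finset.Ico (c1 - m) c1).card = m := by
    rw [Nat.card_Ico]
    omega
  have hBle : B ≤ (m : ℝ) * valN q (c1 - 1) := by
    rw [hB]
    calc ∑ j ∈ Finset.Ico (c1 - m) c1, valN q j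
        ≤ ∑ _j ∈ Finset.Ico (c1 - m) c1, valN q (c1 - 1) := by
          apply Finset.sum_le_sum
          intro j hj
          have := Finset.mem_Ico.1 hj
          exact valN_mono (by omega)
      _ = (m : ℝ) * valN q (c1 - 1) := by
          rw [Finset.sum_const, hcardIco, nsmul_eq_mul]
  intro i₀ hi₀
  have hwle : wf i₀ ≤ Wtop := hWle i₀ hi₀
  have hmpos : (0 : ℝ) < (m : ℝ) := by
    have : 0 < m := hm1
    exact_mod_cast this
  have hchain : (m : ℝ) * Wtop ≤ (lam - κ) * ((m : ℝ) * valN q (c1 - 1)) := by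
    calc (m : ℝ) * Wtop = ∑ i ∈ T, w i := hsumT.symm
      _ ≤ (lam - κ) * B := hTw
      _ ≤ (lam - κ) * ((m : ℝ) * valN q (c1 - 1)) :=
          mul_le_mul_of_nonneg_left hBle (by linarith)
  have hfin : Wtop ≤ (lam - κ) * valN q (c1 - 1) := by nlinarith
  calc (c - p) i₀ = wf i₀ := rfl
    _ ≤ Wtop := hwle
    _ ≤ (lam - κ) * valN q (c1 - 1) := hfin
end BlockBound

-- PART7 BELOW
section BlockBoundBot
attribute [local instance] Classical.propDecidable
open RealInnerProductSpace

variable {q s : ℕ}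

/-- Lower bound for the coordinates of `c - p` on a block. -/
lemma block_bound_bot (J : OrderedPartition q s) {κ lam : ℝ} (hκ : 0 < κ)
    (hκlam : κ ≤ lam) {c p : EuclideanSpace ℝ (Fin q)}
    (hcf : c ∈ lam • face q s J) (hpK : p ∈ κ • face q s J)
    (hVI : ∀ z ∈ κ • face q s J, inner ℝ (c - p) (z - p) ≤ (0 : ℝ)) (k : Fin s) :
    ∀ i₀ ∈ J.blocks k,
      (lam - κ) * valN q (cumCard J (k : ℕ)) ≤ (c - p) i₀ := by
  classical
  have hlam : 0 < lam := lt_of_lt_of_le hκ hκlam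
  set w : EuclideanSpace ℝ (Fin q) := c - p with hw
  set wf : Fin q → ℝ := fun i => w i with hwf
  set Wbot := (J.blocks k).inf' (J.nonempty k) wf with hWbot
  set T := (J.blocks k).filter (fun i => wf i = Wbot) with hT
  obtain ⟨istar, histar, histar2⟩ := Finset.exists_mem_eq_inf' (J.nonempty k) wf
  have histarT : istar ∈ T := Finset.mem_filter.2 ⟨histar, histar2.symm⟩
  set m := T.card with hm
  have hm1 : 1 ≤ m := Finset.card_pos.2 ⟨istar, histarT⟩
  set c0 := cumCard J (k : ℕ) with hc0
  set c1 := cumCard J ((k : ℕ) + 1) with hc1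
  have hTsub : T ⊆ J.blocks k := Finset.filter_subset _ _
  have hmle : m ≤ (J.blocks k).card := Finset.card_le_card hTsub
  have hc01 : c1 = c0 + (J.blocks k).card := cumCard_succ J k
  have hc1q : c1 ≤ q := cumCard_le_q J _ (by omega)
  set B := ∑ j ∈ Finset.Ico c0 (c0 + m), valN q j with hB
  have hvert : ∀ y ∈ {x | ∃ π : Equiv.Perm (Fin q), compatiblePerm J π ∧ x = vertexPoint q π},
      B ≤ ⟪chi q T, y⟫ := by
    rintro y ⟨σ, hσ, rfl⟩
    rw [inner_chi]
    have hinj : Function.Injective (fun i : Fin q => ((σ.symm i : Fin q) : ℕ)) :=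
      Fin.val_injective.comp σ.symm.injective
    have hsum : ∑ i ∈ T, vertexPoint q σ i
        = ∑ j ∈ T.image (fun i => ((σ.symm i : Fin q) : ℕ)), valN q j := by
      rw [Finset.sum_image (fun x _ y _ h => hinj h)]
      exact Finset.sum_congr rfl (fun i _ => vertexPoint_apply σ i)
    rw [hsum]
    apply aux_sum_ge_bot (valN q) valN_mono m c0
    · intro j hj
      obtain ⟨i, hiT, rfl⟩ := Finset.mem_image.1 hj
      have hib : i ∈ J.blocks k := hTsub hiT
      have := (hσ k (σ.symm i)).1 (by rwa [Equiv.apply_symm_apply])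
      exact this.1
    · rw [Finset.card_image_of_injective _ hinj]
  obtain ⟨xc, hxcF, hxc⟩ := Set.mem_smul_set.1 hcf
  have hxcB : B ≤ ⟪chi q T, xc⟫ := inner_ge_of_mem_convexHull hxcF hvert
  have hTc : lam * B ≤ ⟪chi q T, c⟫ := by
    rw [← hxc, real_inner_smul_right]
    exact mul_le_mul_of_nonneg_left hxcB (le_of_lt hlam)
  obtain ⟨xp, hxpF, hxp⟩ := Set.mem_smul_set.1 hpK
  have hxpF' := hxpF
  rw [face, convexHull_eq] at hxpF'
  obtain ⟨ι, tf, a, z, h0, h1, hzFV, hcm⟩ := hxpF'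
  have hxsum : xp = ∑ i ∈ tf, a i • z i := by
    rw [← hcm, Finset.centerMass_eq_of_sum_1 _ _ h1]
  set Mb : ℝ := ⟪w, xp⟫ with hMb
  have hwp : ⟪w, p⟫ = κ * Mb := by rw [hMb, ← hxp, real_inner_smul_right]
  have hcompatle : ∀ σ, compatiblePerm J σ → ⟪w, vertexPoint q σ⟫ ≤ Mb := by
    intro σ hσ
    have hzK : κ • vertexPoint q σ ∈ κ • face q s J :=
      Set.smul_mem_smul_set (subset_convexHull ℝ _ ⟨σ, hσ, rfl⟩)
    have h2 := hVI _ hzK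
    rw [inner_sub_right, real_inner_smul_right, hwp] at h2
    nlinarith
  have hMsum : ∑ i ∈ tf, a i * ⟪w, z i⟫ = Mb := by
    rw [hMb, hxsum, inner_sum]
    apply Finset.sum_congr rfl
    intro i _
    rw [real_inner_smul_right]
  have hgle : ∀ i ∈ tf, ⟪w, z i⟫ ≤ Mb := by
    intro i hi
    obtain ⟨σ, hσc, hzi⟩ := hzFV i hi
    rw [hzi]
    exact hcompatle σ hσc
  have hsupp := aux_eq_max_of_sum h0 h1 hgle hMsum
  have hWge : ∀ i ∈ J.blocks k, Wbot ≤ wf i := fun i hi => Finset.inf'_le wf hi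
  have hzB : ∀ i ∈ tf, a i * ⟪chi q T, z i⟫ = a i * B := by
    intro i hi
    rcases eq_or_ne (a i) 0 with h | h
    · rw [h, zero_mul, zero_mul]
    · obtain ⟨σ, hσc, hzi⟩ := hzFV i hi
      have hgmax : ⟪w, vertexPoint q σ⟫ = Mb := by
        rw [← hzi]
        exact hsupp i hi h
      have hφmax : ∀ σ', compatiblePerm J σ' →
          (∑ pos : Fin q, wf (σ' pos) * valN q (pos : ℕ)) ≤
            ∑ pos : Fin q, wf (σ pos) * valN q (pos : ℕ) := by
        intro σ' hσ'
        have e1 : ∑ pos : Fin q, wf (σ' pos) * valN q (pos : ℕ)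
            = ⟪w, vertexPoint q σ'⟫ := (inner_vertex w σ').symm
        have e2 : ∑ pos : Fin q, wf (σ pos) * valN q (pos : ℕ)
            = ⟪w, vertexPoint q σ⟫ := (inner_vertex w σ).symm
        rw [e1, e2, hgmax]
        exact hcompatle σ' hσ'
      have htie := maximizer_tie_bot J wf hσc hφmax k (W := Wbot) hWge
      have : ⟪chi q T, z i⟫ = B := by
        rw [hzi, inner_chi, hT, htie]
      rw [this]
  have hTp : ⟪chi q T, p⟫ = κ * B := by
    rw [← hxp, real_inner_smul_right, hxsum, inner_sum]
    have h2 : ∑ i ∈ tf, ⟪chi q T, a i • z i⟫ = ∑ i ∈ tf, a i * B := by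
      apply Finset.sum_congr rfl
      intro i hi
      rw [real_inner_smul_right]
      exact hzB i hi
    rw [h2, ← Finset.sum_mul, h1, one_mul]
  have hTw : (lam - κ) * B ≤ ∑ i ∈ T, w i := by
    have h3 : ⟪chi q T, w⟫ = ⟪chi q T, c⟫ - ⟪chi q T, p⟫ := by
      rw [hw, inner_sub_right]
    have h4 := inner_chi T w
    rw [h3, hTp] at h4
    rw [← h4]
    linarith
  have hsumT : ∑ i ∈ T, w i = (m : ℝ) * Wbot := by
    have : ∀ i ∈ T, w i = Wbot := fun i hi => (Finset.mem_filter.1 hi).2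
    rw [Finset.sum_congr rfl this, Finset.sum_const, hm, nsmul_eq_mul]
  have hcardIco : (Finset.Ico c0 (c0 + m)).card = m := by
    rw [Nat.card_Ico]
    omega
  have hBge : (m : ℝ) * valN q c0 ≤ B := by
    rw [hB]
    calc (m : ℝ) * valN q c0
        = ∑ _j ∈ Finset.Ico c0 (c0 + m), valN q c0 := by
          rw [Finset.sum_const, hcardIco, nsmul_eq_mul]
      _ ≤ ∑ j ∈ Finset.Ico c0 (c0 + m), valN q j := by
          apply Finset.sum_le_sum
          intro j hj
          have := Finset.mem_Ico.1 hj
          exact valN_mono (by omega)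
  intro i₀ hi₀
  have hwge : Wbot ≤ wf i₀ := hWge i₀ hi₀
  have hmpos : (0 : ℝ) < (m : ℝ) := by
    have : 0 < m := hm1
    exact_mod_cast this
  have hchain : (lam - κ) * ((m : ℝ) * valN q c0) ≤ (m : ℝ) * Wbot := by
    calc (lam - κ) * ((m : ℝ) * valN q c0)
        ≤ (lam - κ) * B := mul_le_mul_of_nonneg_left hBge (by linarith)
      _ ≤ ∑ i ∈ T, w i := hTw
      _ = (m : ℝ) * Wbot := hsumT
  have hfin : (lam - κ) * valN q c0 ≤ Wbot := by nlinarith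
  calc (lam - κ) * valN q c0 ≤ Wbot := hfin
    _ ≤ wf i₀ := hwge
    _ = (c - p) i₀ := rfl
end BlockBoundBot

-- PART8 BELOW
section Main
attribute [local instance] Classical.propDecidable
open RealInnerProductSpace

/-- for `0 < κ ≤ λ` and `c` in the relative interior of `λ·τ_J`, every
point `(1 − t)·(λ/κ)·π_κ(c) + t·c` with `t ∈ (0, 1]` lies in the relative interior of
`λ·τ_J`. -/
theorem segment_mem_intrinsicInterior_scaled_face (q s : ℕ) (hq : 1 ≤ q)
    (κ lam : ℝ) (hκ : 0 < κ) (hκlam : κ ≤ lam)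
    (J : OrderedPartition q s) (c : EuclideanSpace ℝ (Fin q))
    (hc : c ∈ intrinsicInterior ℝ (lam • face q s J)) :
    ∀ t ∈ Set.Ioc (0 : ℝ) 1,
      (1 - t) • ((lam / κ) • metricProj (κ • permutohedron q) c) + t • c ∈
        intrinsicInterior ℝ (lam • face q s J) := by
  classical
  have hlam : 0 < lam := lt_of_lt_of_le hκ hκlam
  have hFVfin : {x : EuclideanSpace ℝ (Fin q) |
      ∃ π : Equiv.Perm (Fin q), compatiblePerm J π ∧ x = vertexPoint q π}.Finite := by
    apply (Set.finite_range (vertexPoint q)).subset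
    rintro x ⟨π, _, rfl⟩
    exact ⟨π, rfl⟩
  have hFcomp : IsCompact (face q s J) := hFVfin.isCompact_convexHull ℝ
  have hFconv : Convex ℝ (face q s J) := convex_convexHull ℝ _
  have hPcomp : IsCompact (permutohedron q) :=
    (Set.finite_range (vertexPoint q)).isCompact_convexHull ℝ
  have hPconv : Convex ℝ (permutohedron q) := convex_convexHull ℝ _
  obtain ⟨τ₀, hτ₀⟩ := exists_compatible J
  have hFne : (face q s J).Nonempty :=
    ⟨vertexPoint q τ₀, subset_convexHull ℝ _ ⟨τ₀, hτ₀, rfl⟩⟩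
  have hKFcomp : IsCompact (κ • face q s J) := hFcomp.smul κ
  have hKFconv : Convex ℝ (κ • face q s J) := hFconv.smul κ
  have hKFne : (κ • face q s J).Nonempty := hFne.smul_set
  obtain ⟨p, hpK, hpmin⟩ := hKFcomp.exists_isMinOn hKFne
    ((continuous_const.dist continuous_id).continuousOn)
  have hpmin' : ∀ z ∈ κ • face q s J, dist c p ≤ dist c z :=
    fun z hz => isMinOn_iff.1 hpmin z hz
  have hVI : ∀ z ∈ κ • face q s J, inner ℝ (c - p) (z - p) ≤ (0 : ℝ) :=
    aux_variational hKFconv hpK hpmin'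
  have hcf : c ∈ lam • face q s J := intrinsicInterior_subset hc
  -- cross-block monotonicity of c - p
  have hcross : ∀ i j : Fin q, (blockIdx J i : ℕ) < (blockIdx J j : ℕ) →
      (c - p) i ≤ (c - p) j := by
    intro i j hij
    have hik : i ∈ J.blocks (blockIdx J i) := mem_blockIdx J i
    have hjl : j ∈ J.blocks (blockIdx J j) := mem_blockIdx J j
    have h1 := block_bound_top J hκ hκlam hcf hpK hVI (blockIdx J i) i hik
    have h2 := block_bound_bot J hκ hκlam hcf hpK hVI (blockIdx J j) j hjl
    have hcc : cumCard J ((blockIdx J i : ℕ) + 1) - 1 ≤ cumCard J (blockIdx J j : ℕ) := by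
      have := cumCard_mono_s12 J (show (blockIdx J i : ℕ) + 1 ≤ (blockIdx J j : ℕ) by omega)
      omega
    have h3 : valN q (cumCard J ((blockIdx J i : ℕ) + 1) - 1)
        ≤ valN q (cumCard J (blockIdx J j : ℕ)) := valN_mono hcc
    have h4 : (lam - κ) * valN q (cumCard J ((blockIdx J i : ℕ) + 1) - 1)
        ≤ (lam - κ) * valN q (cumCard J (blockIdx J j : ℕ)) :=
      mul_le_mul_of_nonneg_left h3 (by linarith)
    linarith
  obtain ⟨τ, hτc, hτm⟩ := exists_compatible_sorted J (fun i => (c - p) i) hcross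
  -- global maximality of τ for the functional ⟪c - p, ·⟫ among all vertices
  have hτmax : ∀ σ : Equiv.Perm (Fin q),
      ⟪c - p, vertexPoint q σ⟫ ≤ ⟪c - p, vertexPoint q τ⟫ := by
    intro σ
    rw [inner_vertex, inner_vertex]
    have hmono : Monotone (fun pos : Fin q => (c - p) (τ pos)) := hτm
    have hmv : Monovary (fun pos : Fin q => valN q (pos : ℕ))
        (fun pos : Fin q => (c - p) (τ pos)) := by
      intro i j hij
      rcases le_or_gt i j with h | h
      · exact valN_mono (by exact_mod_cast h)
      · exact absurd (hmono (le_of_lt h)) (not_le.2 hij)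
    have hkey := hmv.sum_smul_comp_perm_le_sum_smul (σ := τ⁻¹ * σ)
    simp only [smul_eq_mul] at hkey
    calc ∑ pos : Fin q, (c - p) (σ pos) * valN q (pos : ℕ)
        = ∑ pos : Fin q, valN q (pos : ℕ) * (c - p) (τ ((τ⁻¹ * σ) pos)) := by
          apply Finset.sum_congr rfl
          intro pos _
          rw [Equiv.Perm.mul_apply, Equiv.Perm.inv_def, Equiv.apply_symm_apply]
          ring
      _ ≤ ∑ pos : Fin q, valN q (pos : ℕ) * (c - p) (τ pos) := hkey
      _ = ∑ pos : Fin q, (c - p) (τ pos) * valN q (pos : ℕ) := by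
          apply Finset.sum_congr rfl
          intro pos _
          ring
  -- variational inequality extends to κ • permutohedron
  have hVIP : ∀ z ∈ κ • permutohedron q, inner ℝ (c - p) (z - p) ≤ (0 : ℝ) := by
    intro z hz
    obtain ⟨x, hx, rfl⟩ := Set.mem_smul_set.1 hz
    have hxb : ⟪c - p, x⟫ ≤ ⟪c - p, vertexPoint q τ⟫ := by
      apply inner_le_of_mem_convexHull hx
      rintro y ⟨σ, rfl⟩
      exact hτmax σ
    have hτK : κ • vertexPoint q τ ∈ κ • face q s J :=
      Set.smul_mem_smul_set (subset_convexHull ℝ _ ⟨τ, hτc, rfl⟩)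
    have h5 := hVI _ hτK
    rw [inner_sub_right, real_inner_smul_right] at h5
    rw [inner_sub_right, real_inner_smul_right]
    have h6 : κ * ⟪c - p, x⟫ ≤ κ * ⟪c - p, vertexPoint q τ⟫ :=
      mul_le_mul_of_nonneg_left hxb (le_of_lt hκ)
    linarith
  have hKPcomp : IsCompact (κ • permutohedron q) := hPcomp.smul κ
  have hKPconv : Convex ℝ (κ • permutohedron q) := hPconv.smul κ
  have hKPne : (κ • permutohedron q).Nonempty :=
    ⟨κ • vertexPoint q τ₀, Set.smul_mem_smul_set (subset_convexHull ℝ _ ⟨τ₀, rfl⟩)⟩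
  have hpKP : p ∈ κ • permutohedron q := by
    obtain ⟨x, hxF, hxp⟩ := Set.mem_smul_set.1 hpK
    refine Set.mem_smul_set.2 ⟨x, ?_, hxp⟩
    apply convexHull_mono ?_ hxF
    rintro y ⟨π, _, rfl⟩
    exact ⟨π, rfl⟩
  obtain ⟨pe', hpe'K, hpe'min⟩ := hKPcomp.exists_isMinOn hKPne
    ((continuous_const.dist continuous_id).continuousOn)
  have hex : ∃ y, y ∈ κ • permutohedron q ∧
      ∀ z ∈ κ • permutohedron q, dist c y ≤ dist c z :=
    ⟨pe', hpe'K, fun z hz => isMinOn_iff.1 hpe'min z hz⟩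
  have hpe : metricProj (κ • permutohedron q) c ∈ κ • permutohedron q ∧
      ∀ z ∈ κ • permutohedron q,
        dist c (metricProj (κ • permutohedron q) c) ≤ dist c z := by
    unfold metricProj
    exact Classical.epsilon_spec hex
  have hVIpe := aux_variational hKPconv hpe.1 hpe.2
  have hpeq : metricProj (κ • permutohedron q) c = p :=
    aux_proj_unique hpe.1 hpKP hVIpe hVIP
  obtain ⟨f₀, hf₀, hf₀p⟩ := Set.mem_smul_set.1 hpK
  have hx₀ : (lam / κ) • metricProj (κ • permutohedron q) c ∈ lam • face q s J := by
    rw [hpeq, ← hf₀p, smul_smul, div_mul_cancel₀ lam (ne_of_gt hκ)]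
    exact Set.smul_mem_smul_set hf₀
  intro t ht
  exact aux_combo_mem_intrinsicInterior (hFconv.smul lam) hx₀ hc ht.1 ht.2

end Main

end
end
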